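/- arXiv:2004.10533 — 2 statements merged into one kernel-verified Lean document; each statement's English description precedes it below -/
import Mathlib

section
/- Let n ≥ 2 and 1 ≤ k ≤ n−1, and consider the block upper triangular system ẋ(t) = B(t)x(t) with B(t) = [[B₁₁(t), B₁₂(t)], [0, B₂₂(t)]], where B₁₁, B₁₂, B₂₂ are continuous and uniformly bounded matrices of sizes (n−k)×(n−k), (n−k)×k and k×k. Assume the subsystem ẋ₁ = B₁₁(t)x₁ admits an exponential dichotomy with projection P₁ = 0 and the subsystem ẋ₂ = B₂₂(t)x₂ admits an exponential dichotomy with projection P₂ = I_k. Then the full system ẋ = B(t)x admits an exponential dichotomy with projection P = diag(0_{(n−k)×(n−k)}, I_k). -/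
noncomputable section

open Matrix Set

/-- Euclidean (spectral / 2-norm) operator norm of a real matrix. -/
noncomputable def mnorm {m n : Type*} [Fintype m] [Fintype n] [DecidableEq n]
    (M : Matrix m n ℝ) : ℝ :=
  ‖LinearMap.toContinuousLinearMap (Matrix.toEuclideanLin M)‖

/-- Euclidean 2-norm of a vector. -/
noncomputable def vnorm {n : Type*} [Fintype n] (v : n → ℝ) : ℝ :=
  Real.sqrt (∑ i, (v i) ^ 2)

/-- A matrix-valued function is uniformly bounded on `J = [0, ∞)`. -/
def UnifBdd {m n : Type*} [Fintype m] [Fintype n] [DecidableEq n]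
    (A : ℝ → Matrix m n ℝ) : Prop :=
  ∃ a : ℝ, ∀ t ∈ Ici (0 : ℝ), mnorm (A t) ≤ a

/-- A matrix-valued function is continuous on `J = [0, ∞)` (entrywise). -/
def ContinuousOnJ {m n : Type*} (A : ℝ → Matrix m n ℝ) : Prop :=
  ∀ i j, ContinuousOn (fun t => A t i j) (Ici (0 : ℝ))

/-- `X` is a fundamental matrix solution of `ẋ = A(t) x` on `J = [0, ∞)`. -/
def IsFundamentalSolution {n : Type*} [Fintype n] [DecidableEq n]
    (A X : ℝ → Matrix n n ℝ) : Prop :=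
  (∀ t ∈ Ici (0 : ℝ), IsUnit (X t)) ∧
  ∀ t ∈ Ici (0 : ℝ), ∀ i j,
    HasDerivWithinAt (fun s => X s i j) ((A t * X t) i j) (Ici (0 : ℝ)) t

/-- `Φ` is the state transition matrix of `ẋ = A(t) x` on `J = [0, ∞)`:
`∂Φ(t,t₀)/∂t = A(t) Φ(t,t₀)`, `Φ(t₀,t₀) = I`. -/
def IsStateTransition {n : Type*} [Fintype n] [DecidableEq n]
    (A : ℝ → Matrix n n ℝ) (Φ : ℝ → ℝ → Matrix n n ℝ) : Prop :=
  (∀ t₀ ∈ Ici (0 : ℝ), Φ t₀ t₀ = 1) ∧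
  ∀ t₀ ∈ Ici (0 : ℝ), ∀ t ∈ Ici (0 : ℝ), ∀ i j,
    HasDerivWithinAt (fun s => Φ s t₀ i j) ((A t * Φ t t₀) i j) (Ici (0 : ℝ)) t

/-- The system `ẋ = F(t) x` is uniformly exponentially stable. -/
def SysUES {n : Type*} [Fintype n] [DecidableEq n] (F : ℝ → Matrix n n ℝ) : Prop :=
  ∃ K : ℝ, 1 ≤ K ∧ ∃ μ : ℝ, 0 < μ ∧
    ∀ Φ : ℝ → ℝ → Matrix n n ℝ, IsStateTransition F Φ →
      ∀ t₀ ∈ Ici (0 : ℝ), ∀ t, t₀ ≤ t →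
        mnorm (Φ t t₀) ≤ K * Real.exp (-μ * (t - t₀))

/-- The pair `(A(t), C(t))` is uniformly exponentially detectable. -/
def UnifDetectable {n p : Type*} [Fintype n] [DecidableEq n] [Fintype p] [DecidableEq p]
    (A : ℝ → Matrix n n ℝ) (C : ℝ → Matrix p n ℝ) : Prop :=
  ∃ L : ℝ → Matrix n p ℝ, ContinuousOnJ L ∧ UnifBdd L ∧
    SysUES (fun t => A t - L t * C t)

/-- Observability Gramian `M(t₁, t₀) = ∫_{t₀}^{t₁} Φ(s,t₀)ᵀ C(s)ᵀ C(s) Φ(s,t₀) ds`. -/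
noncomputable def gramian {n p : Type*} [Fintype n] [Fintype p]
    (C : ℝ → Matrix p n ℝ) (Φ : ℝ → ℝ → Matrix n n ℝ) (t₀ t₁ : ℝ) :
    Matrix n n ℝ :=
  Matrix.of fun i j => ∫ s in t₀..t₁, ((Φ s t₀)ᵀ * (C s)ᵀ * C s * Φ s t₀) i j

/-- The pair `(A(t), C(t))` is uniformly completely observable:
`β₁ I ⪯ M(t₀+σ, t₀) ⪯ β₂ I` for all `t₀ ∈ J`. -/
def UCO {n p : Type*} [Fintype n] [DecidableEq n] [Fintype p]
    (A : ℝ → Matrix n n ℝ) (C : ℝ → Matrix p n ℝ) : Prop :=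
  ∃ σ : ℝ, 0 < σ ∧ ∃ β₁ : ℝ, 0 < β₁ ∧ ∃ β₂ : ℝ, 0 < β₂ ∧
    ∀ Φ : ℝ → ℝ → Matrix n n ℝ, IsStateTransition A Φ →
      ∀ t₀ ∈ Ici (0 : ℝ),
        (gramian C Φ t₀ (t₀ + σ) - β₁ • (1 : Matrix n n ℝ)).PosSemidef ∧
        (β₂ • (1 : Matrix n n ℝ) - gramian C Φ t₀ (t₀ + σ)).PosSemidef

/-- Exponential dichotomy estimates for the fundamental solution `X` with
projection `P` and constants `K ≥ 1`, `α > 0`. -/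
def ExpDichotomyWith {n : Type*} [Fintype n] [DecidableEq n]
    (X : ℝ → Matrix n n ℝ) (P : Matrix n n ℝ) (K α : ℝ) : Prop :=
  P * P = P ∧ 1 ≤ K ∧ 0 < α ∧
  (∀ t₀ ∈ Ici (0 : ℝ), ∀ t, t₀ ≤ t →
    mnorm (X t * P * (X t₀)⁻¹) ≤ K * Real.exp (-α * (t - t₀))) ∧
  (∀ t ∈ Ici (0 : ℝ), ∀ t₀, t ≤ t₀ →
    mnorm (X t * (1 - P) * (X t₀)⁻¹) ≤ K * Real.exp (α * (t - t₀)))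

/-- The system `ẋ = A(t) x` admits an exponential dichotomy on `J` with projection `P`. -/
def HasExpDichotomy {n : Type*} [Fintype n] [DecidableEq n]
    (A : ℝ → Matrix n n ℝ) (P : Matrix n n ℝ) : Prop :=
  ∃ X : ℝ → Matrix n n ℝ, ∃ K α : ℝ,
    IsFundamentalSolution A X ∧ ExpDichotomyWith X P K α

/-- `(S, S')` is a Lyapunov transformation together with its derivative:
`S` is continuously differentiable with derivative `S'`, invertible for each `t`,
and `S`, `S⁻¹`, `S'` are uniformly bounded on `J`. -/
def IsLyapunovPair {n : Type*} [Fintype n] [DecidableEq n]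
    (S S' : ℝ → Matrix n n ℝ) : Prop :=
  (∀ t ∈ Ici (0 : ℝ), IsUnit (S t)) ∧
  (∀ t ∈ Ici (0 : ℝ), ∀ i j,
    HasDerivWithinAt (fun s => S s i j) (S' t i j) (Ici (0 : ℝ)) t) ∧
  ContinuousOnJ S' ∧
  UnifBdd S ∧ UnifBdd (fun t => (S t)⁻¹) ∧ UnifBdd S'


section AuxLemmas

section NormLemmas

open scoped Matrix.Norms.L2Operator

variable {m n p : Type*} [Fintype m] [Fintype n] [Fintype p]

lemma mnorm_eq [DecidableEq n] (M : Matrix m n ℝ) : mnorm M = ‖M‖ := rfl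

lemma mnorm_nonneg [DecidableEq n] (M : Matrix m n ℝ) : 0 ≤ mnorm M := by
  rw [mnorm_eq]; exact norm_nonneg _

lemma mnorm_zero [DecidableEq n] : mnorm (0 : Matrix m n ℝ) = 0 := by
  rw [mnorm_eq]; exact norm_zero

lemma mnorm_neg [DecidableEq n] (M : Matrix m n ℝ) : mnorm (-M) = mnorm M := by
  rw [mnorm_eq, mnorm_eq]; exact norm_neg _

lemma mnorm_mul_le [DecidableEq n] [DecidableEq p] (A : Matrix m n ℝ) (B : Matrix n p ℝ) :
    mnorm (A * B) ≤ mnorm A * mnorm B := by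
  simpa only [mnorm_eq] using Matrix.l2_opNorm_mul A B

lemma euclidean_abs_apply_le_norm {ι : Type*} [Fintype ι] (v : EuclideanSpace ℝ ι) (i : ι) :
    |v i| ≤ ‖v‖ := by
  rw [EuclideanSpace.norm_eq]
  have h : |v i| = Real.sqrt (‖v i‖ ^ 2) := by
    rw [Real.sqrt_sq_eq_abs]; simp
  rw [h]
  apply Real.sqrt_le_sqrt
  exact Finset.single_le_sum (f := fun j => ‖v j‖ ^ 2) (fun j _ => by positivity)
    (Finset.mem_univ i)

lemma abs_entry_le_mnorm [DecidableEq n] (M : Matrix m n ℝ) (i : m) (j : n) :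
    |M i j| ≤ mnorm M := by
  have h := Matrix.l2_opNorm_mulVec M (EuclideanSpace.single j (1 : ℝ))
  rw [EuclideanSpace.norm_single] at h
  simp only [norm_one, mul_one] at h
  rw [mnorm_eq]
  refine le_trans ?_ h
  have hv : (M *ᵥ (fun i' => (EuclideanSpace.single j (1:ℝ)) i')) = fun i' => M i' j := by
    have h2 : (fun i' => (EuclideanSpace.single j (1:ℝ)) i') = Pi.single j 1 := by
      ext i'; simp [EuclideanSpace.single_apply, Pi.single_apply]
    rw [h2, Matrix.mulVec_single]
    simp; rfl
  refine le_trans ?_ (euclidean_abs_apply_le_norm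
    ((EuclideanSpace.equiv m ℝ).symm (M *ᵥ (EuclideanSpace.single j 1))) i)
  have h3 : ((EuclideanSpace.equiv m ℝ).symm (M *ᵥ (EuclideanSpace.single j 1))) i = M i j := by
    show (M *ᵥ _) i = M i j
    rw [hv]
  rw [h3]

lemma mnorm_stdBasisMatrix_le [DecidableEq m] [DecidableEq n] (i : m) (j : n) (c : ℝ) :
    mnorm (Matrix.single i j c) ≤ |c| := by
  refine ContinuousLinearMap.opNorm_le_bound _ (abs_nonneg c) fun v => ?_
  have happ : (LinearMap.toContinuousLinearMap
        (Matrix.toEuclideanLin (Matrix.single i j c))) v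
      = (EuclideanSpace.equiv m ℝ).symm (Matrix.single i j c *ᵥ (fun l => v l)) := rfl
  rw [happ]
  have hmv : Matrix.single i j c *ᵥ (fun l => v l) = Pi.single i (c * v j) := by
    ext l
    simp [Matrix.single_mulVec, Pi.single_apply, Function.update_apply]
  rw [hmv]
  have h4 : ((EuclideanSpace.equiv m ℝ).symm (Pi.single i (c * v j)))
      = EuclideanSpace.single i (c * v j) := rfl
  rw [h4, EuclideanSpace.norm_single]
  rw [norm_mul, Real.norm_eq_abs, Real.norm_eq_abs]
  exact mul_le_mul_of_nonneg_left (euclidean_abs_apply_le_norm v j) (abs_nonneg c)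

lemma mnorm_le_sum_abs [DecidableEq m] [DecidableEq n] (M : Matrix m n ℝ) :
    mnorm M ≤ ∑ i, ∑ j, |M i j| := by
  rw [mnorm_eq]
  conv_lhs => rw [Matrix.matrix_eq_sum_single M]
  refine le_trans (norm_sum_le _ _) ?_
  refine Finset.sum_le_sum fun i _ => ?_
  refine le_trans (norm_sum_le _ _) ?_
  refine Finset.sum_le_sum fun j _ => ?_
  rw [← mnorm_eq]
  exact mnorm_stdBasisMatrix_le i j _

lemma sum_abs_le_mnorm [DecidableEq m] [DecidableEq n] (M : Matrix m n ℝ) :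
    ∑ i, ∑ j, |M i j| ≤ (Fintype.card m * Fintype.card n : ℝ) * mnorm M := by
  calc ∑ i, ∑ j, |M i j| ≤ ∑ _i : m, ∑ _j : n, mnorm M :=
        Finset.sum_le_sum fun i _ => Finset.sum_le_sum fun j _ => abs_entry_le_mnorm M i j
    _ = (Fintype.card m * Fintype.card n : ℝ) * mnorm M := by
        simp [Finset.sum_const, Finset.card_univ, mul_assoc]

lemma mnorm_fromBlocks_le {m₁ m₂ n₁ n₂ : Type*} [Fintype m₁] [Fintype m₂] [Fintype n₁]
    [Fintype n₂] [DecidableEq m₁] [DecidableEq m₂] [DecidableEq n₁] [DecidableEq n₂]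
    (A : Matrix m₁ n₁ ℝ) (B : Matrix m₁ n₂ ℝ) (C : Matrix m₂ n₁ ℝ) (D : Matrix m₂ n₂ ℝ) :
    mnorm (Matrix.fromBlocks A B C D) ≤
      ((Fintype.card m₁ + Fintype.card m₂) * (Fintype.card n₁ + Fintype.card n₂) : ℝ) *
        (mnorm A + mnorm B + mnorm C + mnorm D) := by
  set N : ℝ := ((Fintype.card m₁ + Fintype.card m₂) * (Fintype.card n₁ + Fintype.card n₂) : ℝ)
    with hN
  have hN0 : (0:ℝ) ≤ N := by positivity
  refine le_trans (mnorm_le_sum_abs _) ?_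
  rw [Fintype.sum_sum_type]
  have h1 : ∀ i : m₁, ∑ j : n₁ ⊕ n₂, |Matrix.fromBlocks A B C D (Sum.inl i) j|
      = (∑ j : n₁, |A i j|) + ∑ j : n₂, |B i j| := by
    intro i; rw [Fintype.sum_sum_type]; rfl
  have h2 : ∀ i : m₂, ∑ j : n₁ ⊕ n₂, |Matrix.fromBlocks A B C D (Sum.inr i) j|
      = (∑ j : n₁, |C i j|) + ∑ j : n₂, |D i j| := by
    intro i; rw [Fintype.sum_sum_type]; rfl
  simp only [h1, h2, Finset.sum_add_distrib]
  have bA := sum_abs_le_mnorm A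
  have bB := sum_abs_le_mnorm B
  have bC := sum_abs_le_mnorm C
  have bD := sum_abs_le_mnorm D
  have cA : (Fintype.card m₁ * Fintype.card n₁ : ℝ) ≤ N := by
    rw [hN]; nlinarith [Nat.cast_nonneg (α := ℝ) (Fintype.card m₁),
      Nat.cast_nonneg (α := ℝ) (Fintype.card m₂), Nat.cast_nonneg (α := ℝ) (Fintype.card n₁),
      Nat.cast_nonneg (α := ℝ) (Fintype.card n₂)]
  have cB : (Fintype.card m₁ * Fintype.card n₂ : ℝ) ≤ N := by
    rw [hN]; nlinarith [Nat.cast_nonneg (α := ℝ) (Fintype.card m₁),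
      Nat.cast_nonneg (α := ℝ) (Fintype.card m₂), Nat.cast_nonneg (α := ℝ) (Fintype.card n₁),
      Nat.cast_nonneg (α := ℝ) (Fintype.card n₂)]
  have cC : (Fintype.card m₂ * Fintype.card n₁ : ℝ) ≤ N := by
    rw [hN]; nlinarith [Nat.cast_nonneg (α := ℝ) (Fintype.card m₁),
      Nat.cast_nonneg (α := ℝ) (Fintype.card m₂), Nat.cast_nonneg (α := ℝ) (Fintype.card n₁),
      Nat.cast_nonneg (α := ℝ) (Fintype.card n₂)]
  have cD : (Fintype.card m₂ * Fintype.card n₂ : ℝ) ≤ N := by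
    rw [hN]; nlinarith [Nat.cast_nonneg (α := ℝ) (Fintype.card m₁),
      Nat.cast_nonneg (α := ℝ) (Fintype.card m₂), Nat.cast_nonneg (α := ℝ) (Fintype.card n₁),
      Nat.cast_nonneg (α := ℝ) (Fintype.card n₂)]
  nlinarith [mnorm_nonneg A, mnorm_nonneg B, mnorm_nonneg C, mnorm_nonneg D]

end NormLemmas

section AnalyticLemmas

open MeasureTheory

lemma my_integral_exp_neg_Ioi (b t : ℝ) (hb : 0 < b) :
    ∫ s in Ioi t, Real.exp (-b * s) = Real.exp (-b * t) / b := by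
  have hderiv : ∀ x ∈ Ioi t, HasDerivAt (fun s => -Real.exp (-b * s) / b)
      (Real.exp (-b * x)) x := by
    intro x _
    have h1 : HasDerivAt (fun s : ℝ => -b * s) (-b) x := by
      simpa using (hasDerivAt_id x).const_mul (-b)
    have h3 := (h1.exp.neg).div_const b
    refine h3.congr_deriv ?_
    field_simp [hb.ne']
  have hint : IntegrableOn (fun s => Real.exp (-b * s)) (Ioi t) :=
    exp_neg_integrableOn_Ioi t hb
  have hcont : ContinuousWithinAt (fun s => -Real.exp (-b * s) / b) (Ici t) t := by
    apply Continuous.continuousWithinAt; fun_prop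
  have htend : Filter.Tendsto (fun s => -Real.exp (-b * s) / b) Filter.atTop (nhds 0) := by
    have hmul : Filter.Tendsto (fun s : ℝ => b * s) Filter.atTop Filter.atTop :=
      Filter.Tendsto.const_mul_atTop hb Filter.tendsto_id
    have h0 : Filter.Tendsto (fun s : ℝ => Real.exp (-b * s)) Filter.atTop (nhds 0) := by
      have h5 := Real.tendsto_exp_neg_atTop_nhds_zero.comp hmul
      simpa [Function.comp_def, neg_mul] using h5
    simpa using h0.neg.div_const b
  have h6 := MeasureTheory.integral_Ioi_of_hasDerivAt_of_tendsto hcont hderiv hint htend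
  rw [h6]
  ring

lemma ftc_hasDerivWithinAt {f : ℝ → ℝ} (hc : ContinuousOn f (Ici 0)) {t : ℝ} (ht : 0 ≤ t) :
    HasDerivWithinAt (fun u => ∫ x in (0:ℝ)..u, f x) (f t) (Ici 0) t := by
  have hmeasIci : AEStronglyMeasurable f (MeasureTheory.volume.restrict (Ici (0:ℝ))) :=
    hc.aestronglyMeasurable measurableSet_Ici
  rcases eq_or_lt_of_le ht with rfl | htpos
  · have hint : IntervalIntegrable f MeasureTheory.volume 0 0 :=
      ContinuousOn.intervalIntegrable (hc.mono (by simp))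
    exact intervalIntegral.integral_hasDerivWithinAt_right hint
      ⟨Ici 0, Filter.mem_of_superset self_mem_nhdsWithin Ioi_subset_Ici_self, hmeasIci⟩
      ((hc 0 self_mem_Ici).mono Ioi_subset_Ici_self)
  · have hIci : Ici (0:ℝ) ∈ nhds t := Ici_mem_nhds htpos
    have hint : IntervalIntegrable f MeasureTheory.volume 0 t :=
      ContinuousOn.intervalIntegrable (hc.mono (by rw [uIcc_of_le ht]; exact Icc_subset_Ici_self))
    exact (intervalIntegral.integral_hasDerivAt_right hint
      ⟨Ici 0, hIci, hmeasIci⟩ ((hc t htpos.le).continuousAt hIci)).hasDerivWithinAt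

lemma contOnJ_mul {m p q : Type*} [Fintype p] {A : ℝ → Matrix m p ℝ} {B : ℝ → Matrix p q ℝ}
    (hA : ∀ i j, ContinuousOn (fun t => A t i j) (Ici 0))
    (hB : ∀ i j, ContinuousOn (fun t => B t i j) (Ici 0)) :
    ∀ i j, ContinuousOn (fun t => (A t * B t) i j) (Ici 0) := by
  intro i j
  simp only [Matrix.mul_apply]
  exact continuousOn_finset_sum _ fun l _ => (hA i l).mul (hB l j)

lemma contOnJ_inv {n' : Type*} [Fintype n'] [DecidableEq n'] {A : ℝ → Matrix n' n' ℝ}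
    (hA : ∀ i j, ContinuousOn (fun t => A t i j) (Ici 0))
    (hu : ∀ t ∈ Ici (0:ℝ), IsUnit (A t)) :
    ∀ i j, ContinuousOn (fun t => (A t)⁻¹ i j) (Ici 0) := by
  have hAc : ContinuousOn (fun t => A t) (Ici (0:ℝ)) :=
    continuousOn_pi.2 fun i => continuousOn_pi.2 fun j => hA i j
  have hdetc : Continuous (fun M : Matrix n' n' ℝ => M.det) := continuous_id.matrix_det
  have hdet : ContinuousOn (fun t => (A t).det) (Ici 0) := hdetc.comp_continuousOn hAc
  intro i j
  have hadjc : Continuous (fun M : Matrix n' n' ℝ => M.adjugate i j) :=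
    (continuous_apply j).comp ((continuous_apply i).comp continuous_id.matrix_adjugate)
  have hadj : ContinuousOn (fun t => (A t).adjugate i j) (Ici 0) := hadjc.comp_continuousOn hAc
  have hne : ∀ t ∈ Ici (0:ℝ), (A t).det ≠ 0 := fun t ht =>
    ((Matrix.isUnit_iff_isUnit_det _).1 (hu t ht)).ne_zero
  refine ContinuousOn.congr ((hdet.inv₀ hne).mul hadj) ?_
  intro t ht
  show (A t)⁻¹ i j = ((A t).det)⁻¹ * (A t).adjugate i j
  rw [Matrix.inv_def, Matrix.smul_apply, smul_eq_mul, Ring.inverse_eq_inv]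

lemma entry_mul_integral_mul {p q r s : Type*} [Fintype q] [Fintype r]
    (A : Matrix p q ℝ) (Bm : Matrix r s ℝ) (Gf : ℝ → Matrix q r ℝ) (T : Set ℝ)
    (hint : ∀ l m, IntegrableOn (fun u => Gf u l m) T) (i : p) (j : s) :
    (A * (Matrix.of fun l m => ∫ u in T, Gf u l m) * Bm) i j
      = ∫ u in T, (A * Gf u * Bm) i j := by
  have hint2 : ∀ (m' : r) (l : q),
      Integrable (fun u => A i l * Gf u l m' * Bm m' j) (volume.restrict T) :=
    fun m' l => ((hint l m').const_mul (A i l)).mul_const (Bm m' j)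
  simp only [Matrix.mul_apply, Matrix.of_apply, Finset.sum_mul]
  have hpt : ∀ (m' : r) (l : q), A i l * (∫ u in T, Gf u l m') * Bm m' j
      = ∫ u in T, A i l * Gf u l m' * Bm m' j := by
    intro m' l
    rw [← MeasureTheory.integral_const_mul, ← MeasureTheory.integral_mul_const]
  simp_rw [hpt]
  have hswap : ∀ m' : r, (∑ l, ∫ u in T, A i l * Gf u l m' * Bm m' j)
      = ∫ u in T, ∑ l, A i l * Gf u l m' * Bm m' j := fun m' =>
    (MeasureTheory.integral_finset_sum _ (fun l _ => hint2 m' l)).symm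
  simp_rw [hswap]
  rw [← MeasureTheory.integral_finset_sum _ (fun m' _ =>
    integrable_finset_sum _ (fun l _ => hint2 m' l))]

end AnalyticLemmas

end AuxLemmas

set_option maxHeartbeats 1000000 in
open MeasureTheory in
/-- Exponential dichotomy of block triangular systems (Proposition 3, first part):
if the diagonal blocks admit exponential dichotomies with projections `0` and `I`,
the full block upper triangular system admits an exponential dichotomy with
projection `diag(0, I)`. -/
theorem expDichotomy_block_triangular
    (n k : ℕ) (hn : 2 ≤ n) (hk1 : 1 ≤ k) (hk2 : k ≤ n - 1)
    (B11 : ℝ → Matrix (Fin (n - k)) (Fin (n - k)) ℝ)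
    (B12 : ℝ → Matrix (Fin (n - k)) (Fin k) ℝ)
    (B22 : ℝ → Matrix (Fin k) (Fin k) ℝ)
    (hB11 : ContinuousOnJ B11 ∧ UnifBdd B11)
    (hB12 : ContinuousOnJ B12 ∧ UnifBdd B12)
    (hB22 : ContinuousOnJ B22 ∧ UnifBdd B22)
    (hED1 : HasExpDichotomy B11 (0 : Matrix (Fin (n - k)) (Fin (n - k)) ℝ))
    (hED2 : HasExpDichotomy B22 (1 : Matrix (Fin k) (Fin k) ℝ)) :
    HasExpDichotomy (fun t => Matrix.fromBlocks (B11 t) (B12 t) 0 (B22 t))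
      (Matrix.fromBlocks 0 0 0 (1 : Matrix (Fin k) (Fin k) ℝ)) := by
  classical
  obtain ⟨X1, K1, α1, ⟨hX1u, hX1d⟩, hPP1, hK1, hα1, hfwd1, hbwd1⟩ := hED1
  obtain ⟨X2, K2, α2, ⟨hX2u, hX2d⟩, hPP2, hK2, hα2, hfwd2, hbwd2⟩ := hED2
  obtain ⟨a₀, ha₀⟩ := hB12.2
  set a : ℝ := max a₀ 0 with ha
  have ha0 : 0 ≤ a := le_max_right _ _
  have hB12b : ∀ s, 0 ≤ s → mnorm (B12 s) ≤ a := fun s hs =>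
    (ha₀ s hs).trans (le_max_left _ _)
  set α : ℝ := min α1 α2 with hαdef
  have hα : 0 < α := lt_min hα1 hα2
  set K : ℝ := max K1 K2 with hKdef
  have hK : 1 ≤ K := le_trans hK1 (le_max_left _ _)
  have hK0 : 0 < K := lt_of_lt_of_le one_pos hK
  have hdet1 : ∀ t, 0 ≤ t → IsUnit (X1 t).det := fun t ht =>
    (Matrix.isUnit_iff_isUnit_det _).1 (hX1u t ht)
  have hdet2 : ∀ t, 0 ≤ t → IsUnit (X2 t).det := fun t ht =>
    (Matrix.isUnit_iff_isUnit_det _).1 (hX2u t ht)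
  -- basic dichotomy estimates with common constants
  have hX1b : ∀ t t₀ : ℝ, 0 ≤ t → t ≤ t₀ →
      mnorm (X1 t * (X1 t₀)⁻¹) ≤ K * Real.exp (α * (t - t₀)) := by
    intro t t₀ h0 h1
    have h := hbwd1 t h0 t₀ h1
    rw [sub_zero, Matrix.mul_one] at h
    refine h.trans (mul_le_mul (le_max_left _ _) (Real.exp_le_exp.2 ?_)
      (Real.exp_pos _).le (by positivity))
    exact mul_le_mul_of_nonpos_right (min_le_left _ _) (by linarith)
  have hX2b : ∀ t₀ t : ℝ, 0 ≤ t₀ → t₀ ≤ t →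
      mnorm (X2 t * (X2 t₀)⁻¹) ≤ K * Real.exp (-α * (t - t₀)) := by
    intro t₀ t h0 h1
    have h := hfwd2 t₀ h0 t h1
    rw [Matrix.mul_one] at h
    refine h.trans (mul_le_mul (le_max_right _ _) (Real.exp_le_exp.2 ?_)
      (Real.exp_pos _).le (by positivity))
    exact mul_le_mul_of_nonneg_right (neg_le_neg (min_le_right _ _)) (by linarith)
  -- continuity
  have hX1c : ∀ i j, ContinuousOn (fun s => X1 s i j) (Ici 0) :=
    fun i j t ht => (hX1d t ht i j).continuousWithinAt
  have hX2c : ∀ i j, ContinuousOn (fun s => X2 s i j) (Ici 0) :=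
    fun i j t ht => (hX2d t ht i j).continuousWithinAt
  have hX1invc := contOnJ_inv hX1c hX1u
  set G : ℝ → Matrix (Fin (n - k)) (Fin k) ℝ :=
    fun s => (X1 s)⁻¹ * B12 s * X2 s with hGdef
  have hGc : ∀ i j, ContinuousOn (fun s => G s i j) (Ici 0) :=
    contOnJ_mul (contOnJ_mul hX1invc hB12.1) hX2c
  -- the key pointwise bound
  have hKey : ∀ t t₀ s : ℝ, 0 ≤ t₀ → 0 ≤ t → t ≤ s → t₀ ≤ s →
      mnorm (X1 t * G s * (X2 t₀)⁻¹) ≤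
        (K * K * a) * Real.exp (α * (t + t₀)) * Real.exp (-(2*α) * s) := by
    intro t t₀ s h₀ h1 h2 h3
    have hs0 : (0:ℝ) ≤ s := le_trans h1 h2
    have hfact : X1 t * G s * (X2 t₀)⁻¹ =
        (X1 t * (X1 s)⁻¹) * (B12 s * (X2 s * (X2 t₀)⁻¹)) := by
      rw [hGdef]
      simp only [Matrix.mul_assoc]
    rw [hfact]
    calc mnorm ((X1 t * (X1 s)⁻¹) * (B12 s * (X2 s * (X2 t₀)⁻¹)))
        ≤ mnorm (X1 t * (X1 s)⁻¹) * mnorm (B12 s * (X2 s * (X2 t₀)⁻¹)) := mnorm_mul_le _ _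
      _ ≤ mnorm (X1 t * (X1 s)⁻¹) * (mnorm (B12 s) * mnorm (X2 s * (X2 t₀)⁻¹)) :=
          mul_le_mul_of_nonneg_left (mnorm_mul_le _ _) (mnorm_nonneg _)
      _ ≤ (K * Real.exp (α * (t - s))) * (a * (K * Real.exp (-α * (s - t₀)))) := by
          refine mul_le_mul (hX1b t s h1 h2) ?_
            (mul_nonneg (mnorm_nonneg _) (mnorm_nonneg _)) (by positivity)
          exact mul_le_mul (hB12b s hs0) (hX2b t₀ s h₀ h3) (mnorm_nonneg _) ha0
      _ = (K * K * a) * (Real.exp (α * (t - s)) * Real.exp (-α * (s - t₀))) := by ring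
      _ = (K * K * a) * (Real.exp (α * (t + t₀)) * Real.exp (-(2*α) * s)) := by
          rw [← Real.exp_add, ← Real.exp_add]; ring_nf
      _ = (K * K * a) * Real.exp (α * (t + t₀)) * Real.exp (-(2*α) * s) := by ring
  -- decay bound on G
  set C₀ : ℝ := mnorm ((X1 0)⁻¹) * (K * K * a) * mnorm (X2 0) with hC₀def
  have hC₀0 : 0 ≤ C₀ := mul_nonneg (mul_nonneg (mnorm_nonneg _) (by positivity)) (mnorm_nonneg _)
  have hGb : ∀ s : ℝ, 0 ≤ s → mnorm (G s) ≤ C₀ * Real.exp (-(2*α) * s) := by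
    intro s hs
    have hfact : G s = (X1 0)⁻¹ * ((X1 0 * G s * (X2 0)⁻¹) * X2 0) := by
      have h1 : (X1 0)⁻¹ * ((X1 0 * G s * (X2 0)⁻¹) * X2 0)
          = ((X1 0)⁻¹ * X1 0) * (G s * ((X2 0)⁻¹ * X2 0)) := by
        simp only [Matrix.mul_assoc]
      rw [h1, Matrix.nonsing_inv_mul _ (hdet1 0 le_rfl), Matrix.nonsing_inv_mul _ (hdet2 0 le_rfl),
        Matrix.one_mul, Matrix.mul_one]
    calc mnorm (G s) = mnorm ((X1 0)⁻¹ * ((X1 0 * G s * (X2 0)⁻¹) * X2 0)) := by rw [← hfact]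
      _ ≤ mnorm ((X1 0)⁻¹) * (mnorm (X1 0 * G s * (X2 0)⁻¹) * mnorm (X2 0)) :=
          le_trans (mnorm_mul_le _ _)
            (mul_le_mul_of_nonneg_left (mnorm_mul_le _ _) (mnorm_nonneg _))
      _ ≤ mnorm ((X1 0)⁻¹) *
            (((K * K * a) * Real.exp (α * (0 + 0)) * Real.exp (-(2*α) * s)) * mnorm (X2 0)) := by
          refine mul_le_mul_of_nonneg_left
            (mul_le_mul_of_nonneg_right (hKey 0 0 s le_rfl le_rfl hs hs) (mnorm_nonneg _))
            (mnorm_nonneg _)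
      _ = C₀ * Real.exp (-(2*α) * s) := by
          rw [hC₀def]
          simp only [add_zero, mul_zero, Real.exp_zero]
          ring
  -- integrability of G entries
  have hGint : ∀ t : ℝ, 0 ≤ t → ∀ l m, IntegrableOn (fun s => G s l m) (Ioi t) := by
    intro t ht l m
    have hb : IntegrableOn (fun s => C₀ * Real.exp (-(2*α) * s)) (Ioi t) :=
      (exp_neg_integrableOn_Ioi t (by linarith)).const_mul C₀
    refine Integrable.mono' hb
      (((hGc l m).mono (fun x hx => le_trans ht (le_of_lt hx))).aestronglyMeasurable
        measurableSet_Ioi) ?_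
    filter_upwards [ae_restrict_mem measurableSet_Ioi] with s hs
    have hs0 : (0:ℝ) ≤ s := le_trans ht (le_of_lt hs)
    calc ‖G s l m‖ = |G s l m| := rfl
      _ ≤ mnorm (G s) := abs_entry_le_mnorm _ _ _
      _ ≤ C₀ * Real.exp (-(2*α) * s) := hGb s hs0
  -- the correction matrices
  set Cm : Matrix (Fin (n - k)) (Fin k) ℝ :=
    Matrix.of (fun l m => ∫ s in Ioi (0:ℝ), G s l m) with hCmdef
  set W : ℝ → Matrix (Fin (n - k)) (Fin k) ℝ :=
    fun t => Matrix.of (fun l m => (∫ s in (0:ℝ)..t, G s l m) - Cm l m) with hWdef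
  set Y : ℝ → Matrix (Fin (n - k)) (Fin k) ℝ := fun t => X1 t * W t with hYdef
  set X : ℝ → Matrix (Fin (n - k) ⊕ Fin k) (Fin (n - k) ⊕ Fin k) ℝ :=
    fun t => Matrix.fromBlocks (X1 t) (Y t) 0 (X2 t) with hXdef
  have hWsplit : ∀ t : ℝ, 0 ≤ t → W t = -(Matrix.of fun l m => ∫ s in Ioi t, G s l m) := by
    intro t ht
    ext l m
    have hsplit : ∫ s in Ioi (0:ℝ), G s l m
        = (∫ s in Ioc (0:ℝ) t, G s l m) + ∫ s in Ioi t, G s l m := by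
      rw [← MeasureTheory.setIntegral_union (Set.Ioc_disjoint_Ioi le_rfl) measurableSet_Ioi
        ((hGint 0 le_rfl l m).mono_set Set.Ioc_subset_Ioi_self) (hGint t ht l m),
        Set.Ioc_union_Ioi_eq_Ioi ht]
    have h2 : (∫ s in (0:ℝ)..t, G s l m) = ∫ s in Ioc (0:ℝ) t, G s l m :=
      intervalIntegral.integral_of_le ht
    show (∫ s in (0:ℝ)..t, G s l m) - Cm l m = -(∫ s in Ioi t, G s l m)
    rw [h2, hCmdef]
    show (∫ s in Ioc (0:ℝ) t, G s l m) - (∫ s in Ioi (0:ℝ), G s l m) = _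
    rw [hsplit]; ring
  -- key decay estimate on Y t * (X2 t₀)⁻¹
  have hYentry : ∀ t t₀ : ℝ, 0 ≤ t₀ → t₀ ≤ t → ∀ i j,
      |(Y t * (X2 t₀)⁻¹) i j| ≤ (K * K * a / (2*α)) * Real.exp (-α * (t - t₀)) := by
    intro t t₀ h₀ h₁ i j
    have ht0 : (0:ℝ) ≤ t := le_trans h₀ h₁
    have key : (Y t * (X2 t₀)⁻¹) i j = -∫ s in Ioi t, (X1 t * G s * (X2 t₀)⁻¹) i j := by
      rw [hYdef]
      show (X1 t * W t * (X2 t₀)⁻¹) i j = _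
      rw [hWsplit t ht0, Matrix.mul_neg, Matrix.neg_mul, Matrix.neg_apply]
      rw [entry_mul_integral_mul (X1 t) ((X2 t₀)⁻¹) G (Ioi t) (hGint t ht0) i j]
    rw [key, abs_neg]
    have hbound : ∀ᵐ s ∂(volume.restrict (Ioi t)), ‖(X1 t * G s * (X2 t₀)⁻¹) i j‖ ≤
        (K * K * a) * Real.exp (α * (t + t₀)) * Real.exp (-(2*α) * s) := by
      filter_upwards [ae_restrict_mem measurableSet_Ioi] with s hs
      calc ‖(X1 t * G s * (X2 t₀)⁻¹) i j‖ = |(X1 t * G s * (X2 t₀)⁻¹) i j| := rfl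
        _ ≤ mnorm (X1 t * G s * (X2 t₀)⁻¹) := abs_entry_le_mnorm _ _ _
        _ ≤ _ := hKey t t₀ s h₀ ht0 (le_of_lt hs) (le_trans h₁ (le_of_lt hs))
    have hgint : Integrable
        (fun s => (K * K * a) * Real.exp (α * (t + t₀)) * Real.exp (-(2*α) * s))
        (volume.restrict (Ioi t)) :=
      (exp_neg_integrableOn_Ioi t (by linarith)).const_mul _
    have hle := MeasureTheory.norm_integral_le_of_norm_le hgint hbound
    calc |∫ s in Ioi t, (X1 t * G s * (X2 t₀)⁻¹) i j|
        ≤ ∫ s in Ioi t, (K * K * a) * Real.exp (α * (t + t₀)) * Real.exp (-(2*α) * s) := hle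
      _ = (K * K * a) * Real.exp (α * (t + t₀)) * (Real.exp (-(2*α) * t) / (2*α)) := by
          rw [MeasureTheory.integral_const_mul, my_integral_exp_neg_Ioi (2*α) t (by linarith)]
      _ = (K * K * a / (2*α)) * (Real.exp (α * (t + t₀)) * Real.exp (-(2*α) * t)) := by ring
      _ = (K * K * a / (2*α)) * Real.exp (-α * (t - t₀)) := by
          rw [← Real.exp_add]; ring_nf
  obtain ⟨CY, hCY0, hYb⟩ : ∃ CY : ℝ, 0 ≤ CY ∧ ∀ t t₀ : ℝ, 0 ≤ t₀ → t₀ ≤ t →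
      mnorm (Y t * (X2 t₀)⁻¹) ≤ CY * Real.exp (-α * (t - t₀)) := by
    refine ⟨(((n - k : ℕ) : ℝ) * (k : ℝ)) * (K * K * a / (2*α)), ?_, ?_⟩
    · refine mul_nonneg (by positivity) (div_nonneg (by positivity) (by linarith))
    intro t t₀ h₀ h₁
    refine le_trans (mnorm_le_sum_abs _) ?_
    calc ∑ i, ∑ j, |(Y t * (X2 t₀)⁻¹) i j|
        ≤ ∑ _i : Fin (n-k), ∑ _j : Fin k, (K * K * a / (2*α)) * Real.exp (-α * (t - t₀)) :=
          Finset.sum_le_sum fun i _ => Finset.sum_le_sum fun j _ => hYentry t t₀ h₀ h₁ i j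
      _ = _ := by
          simp only [Finset.sum_const, Finset.card_univ, Fintype.card_fin, nsmul_eq_mul]
          ring
  -- derivative of W
  have hWd : ∀ t, t ∈ Ici (0:ℝ) → ∀ l m,
      HasDerivWithinAt (fun s => W s l m) (G t l m) (Ici 0) t := by
    intro t ht l m
    have h := (ftc_hasDerivWithinAt (hGc l m) ht).sub_const (Cm l m)
    simpa only [hWdef, Matrix.of_apply] using h
  -- derivative of Y
  have hYd : ∀ t, t ∈ Ici (0:ℝ) → ∀ i j,
      HasDerivWithinAt (fun s => Y s i j) ((B11 t * Y t + B12 t * X2 t) i j) (Ici 0) t := by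
    intro t ht i j
    have hsum : HasDerivWithinAt (fun s => ∑ l, X1 s i l * W s l j)
        (∑ l, ((B11 t * X1 t) i l * W t l j + X1 t i l * G t l j)) (Ici 0) t :=
      HasDerivWithinAt.fun_sum fun l _ => (hX1d t ht i l).mul (hWd t ht l j)
    have heq : (fun s => Y s i j) = fun s => ∑ l, X1 s i l * W s l j := by
      funext s; rw [hYdef]; simp [Matrix.mul_apply]
    have hval : (∑ l, ((B11 t * X1 t) i l * W t l j + X1 t i l * G t l j))
        = (B11 t * Y t + B12 t * X2 t) i j := by
      rw [Finset.sum_add_distrib]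
      have e1 : (∑ l, (B11 t * X1 t) i l * W t l j) = (B11 t * Y t) i j := by
        rw [hYdef]
        show _ = (B11 t * (X1 t * W t)) i j
        rw [← Matrix.mul_assoc, Matrix.mul_apply]
      have e2 : (∑ l, X1 t i l * G t l j) = (B12 t * X2 t) i j := by
        have hq : X1 t * G t = B12 t * X2 t := by
          rw [hGdef]
          show X1 t * ((X1 t)⁻¹ * B12 t * X2 t) = _
          rw [show X1 t * ((X1 t)⁻¹ * B12 t * X2 t)
              = (X1 t * (X1 t)⁻¹) * (B12 t * X2 t) from by simp only [Matrix.mul_assoc],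
            Matrix.mul_nonsing_inv _ (hdet1 t ht), Matrix.one_mul]
        rw [← hq, Matrix.mul_apply]
      rw [e1, e2, Matrix.add_apply]
    rw [heq, ← hval]
    exact hsum
  -- fundamental solution
  have hXudet : ∀ t, 0 ≤ t → IsUnit (X t).det := by
    intro t ht
    rw [hXdef]
    show IsUnit (Matrix.fromBlocks (X1 t) (Y t) 0 (X2 t)).det
    rw [Matrix.det_fromBlocks_zero₂₁]
    exact (hdet1 t ht).mul (hdet2 t ht)
  have hXfund : IsFundamentalSolution (fun t => Matrix.fromBlocks (B11 t) (B12 t) 0 (B22 t)) X := by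
    constructor
    · intro t ht
      rw [Matrix.isUnit_iff_isUnit_det]
      exact hXudet t ht
    · intro t ht i j
      have hBX : (Matrix.fromBlocks (B11 t) (B12 t) 0 (B22 t)) * X t
          = Matrix.fromBlocks (B11 t * X1 t) (B11 t * Y t + B12 t * X2 t) 0 (B22 t * X2 t) := by
        rw [hXdef]
        show Matrix.fromBlocks (B11 t) (B12 t) 0 (B22 t) *
          Matrix.fromBlocks (X1 t) (Y t) 0 (X2 t) = _
        rw [Matrix.fromBlocks_multiply]
        simp [Matrix.mul_zero, Matrix.zero_mul, add_zero, zero_add]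
      show HasDerivWithinAt (fun s => X s i j)
        ((Matrix.fromBlocks (B11 t) (B12 t) 0 (B22 t) * X t) i j) (Ici 0) t
      rw [hBX]
      have hXapp : ∀ s, X s = Matrix.fromBlocks (X1 s) (Y s) 0 (X2 s) := fun s => by rw [hXdef]
      cases i with
      | inl i =>
        cases j with
        | inl j =>
          simp only [hXapp, Matrix.fromBlocks_apply₁₁]
          exact hX1d t ht i j
        | inr j =>
          simp only [hXapp, Matrix.fromBlocks_apply₁₂]
          exact hYd t ht i j
      | inr i =>
        cases j with
        | inl j =>
          simp only [hXapp, Matrix.fromBlocks_apply₂₁, Matrix.zero_apply]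
          exact hasDerivWithinAt_const _ _ _
        | inr j =>
          simp only [hXapp, Matrix.fromBlocks_apply₂₂]
          exact hX2d t ht i j
  -- final constants
  obtain ⟨Nb, hNb0, hNbb⟩ : ∃ Nb : ℝ, 0 ≤ Nb ∧
      ∀ (A : Matrix (Fin (n-k)) (Fin (n-k)) ℝ) (B : Matrix (Fin (n-k)) (Fin k) ℝ)
        (C : Matrix (Fin k) (Fin (n-k)) ℝ) (D : Matrix (Fin k) (Fin k) ℝ),
        mnorm (Matrix.fromBlocks A B C D) ≤ Nb * (mnorm A + mnorm B + mnorm C + mnorm D) := by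
    refine ⟨((Fintype.card (Fin (n-k)) + Fintype.card (Fin k)) *
      (Fintype.card (Fin (n-k)) + Fintype.card (Fin k)) : ℝ), by positivity, ?_⟩
    intro A B C D
    exact mnorm_fromBlocks_le A B C D
  set Kf : ℝ := 1 + Nb * (K + CY + K * CY) with hKfdef
  have hKf1 : 1 ≤ Kf := by
    have : 0 ≤ Nb * (K + CY + K * CY) :=
      mul_nonneg hNb0 (by nlinarith)
    linarith
  refine ⟨X, Kf, α, hXfund, ?_, hKf1, hα, ?_, ?_⟩
  · -- projection
    show Matrix.fromBlocks 0 0 0 (1 : Matrix (Fin k) (Fin k) ℝ) * Matrix.fromBlocks 0 0 0 1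
      = Matrix.fromBlocks 0 0 0 1
    rw [Matrix.fromBlocks_multiply]
    simp
  · -- forward estimate
    intro t₀ ht₀ t htt
    have ht : (0:ℝ) ≤ t := le_trans ht₀ htt
    have hM : X t * (Matrix.fromBlocks 0 0 0 (1 : Matrix (Fin k) (Fin k) ℝ)) * (X t₀)⁻¹
        = Matrix.fromBlocks 0 (Y t * (X2 t₀)⁻¹) 0 (X2 t * (X2 t₀)⁻¹) := by
      have h1 : Matrix.fromBlocks 0 (Y t * (X2 t₀)⁻¹) 0 (X2 t * (X2 t₀)⁻¹) * X t₀
          = X t * (Matrix.fromBlocks 0 0 0 (1 : Matrix (Fin k) (Fin k) ℝ)) := by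
        rw [hXdef]
        show Matrix.fromBlocks 0 (Y t * (X2 t₀)⁻¹) 0 (X2 t * (X2 t₀)⁻¹) *
            Matrix.fromBlocks (X1 t₀) (Y t₀) 0 (X2 t₀)
          = Matrix.fromBlocks (X1 t) (Y t) 0 (X2 t) * Matrix.fromBlocks 0 0 0 1
        rw [Matrix.fromBlocks_multiply, Matrix.fromBlocks_multiply]
        simp only [Matrix.mul_zero, Matrix.zero_mul, add_zero, zero_add,
          Matrix.mul_one, Matrix.mul_assoc, Matrix.nonsing_inv_mul _ (hdet2 t₀ ht₀)]
      calc X t * (Matrix.fromBlocks 0 0 0 (1 : Matrix (Fin k) (Fin k) ℝ)) * (X t₀)⁻¹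
          = (Matrix.fromBlocks 0 (Y t * (X2 t₀)⁻¹) 0 (X2 t * (X2 t₀)⁻¹) * X t₀) * (X t₀)⁻¹ := by
            rw [h1]
        _ = Matrix.fromBlocks 0 (Y t * (X2 t₀)⁻¹) 0 (X2 t * (X2 t₀)⁻¹) := by
            rw [Matrix.mul_assoc, Matrix.mul_nonsing_inv _ (hXudet t₀ ht₀), Matrix.mul_one]
    rw [hM]
    refine le_trans (hNbb _ _ _ _) ?_
    simp only [mnorm_zero]
    have b1 := hYb t t₀ ht₀ htt
    have b2 := hX2b t₀ t ht₀ htt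
    have hexp : (0:ℝ) < Real.exp (-α * (t - t₀)) := Real.exp_pos _
    calc Nb * (0 + mnorm (Y t * (X2 t₀)⁻¹) + 0 + mnorm (X2 t * (X2 t₀)⁻¹))
        = Nb * (mnorm (Y t * (X2 t₀)⁻¹) + mnorm (X2 t * (X2 t₀)⁻¹)) := by ring
      _ ≤ Nb * (CY * Real.exp (-α * (t - t₀)) + K * Real.exp (-α * (t - t₀))) :=
          mul_le_mul_of_nonneg_left (by linarith) hNb0
      _ = (Nb * (CY + K)) * Real.exp (-α * (t - t₀)) := by ring
      _ ≤ Kf * Real.exp (-α * (t - t₀)) := by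
          refine mul_le_mul_of_nonneg_right ?_ hexp.le
          rw [hKfdef]
          nlinarith [mul_nonneg hNb0 (mul_nonneg hK0.le hCY0)]
  · -- backward estimate
    intro t ht t₀ htt
    have ht₀ : (0:ℝ) ≤ t₀ := le_trans ht htt
    have hproj : (1 : Matrix (Fin (n-k) ⊕ Fin k) (Fin (n-k) ⊕ Fin k) ℝ)
        - Matrix.fromBlocks 0 0 0 (1 : Matrix (Fin k) (Fin k) ℝ)
        = Matrix.fromBlocks 1 0 0 (0 : Matrix (Fin k) (Fin k) ℝ) := by
      ext i j
      cases i <;> cases j <;>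
        simp [Matrix.sub_apply, Matrix.fromBlocks_apply₁₁, Matrix.fromBlocks_apply₁₂,
          Matrix.fromBlocks_apply₂₁, Matrix.fromBlocks_apply₂₂, Matrix.one_apply]
    have hM : X t * ((1 : Matrix (Fin (n-k) ⊕ Fin k) (Fin (n-k) ⊕ Fin k) ℝ)
          - Matrix.fromBlocks 0 0 0 (1 : Matrix (Fin k) (Fin k) ℝ)) * (X t₀)⁻¹
        = Matrix.fromBlocks (X1 t * (X1 t₀)⁻¹)
            (-(X1 t * (X1 t₀)⁻¹ * (Y t₀ * (X2 t₀)⁻¹))) 0 0 := by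
      have h1 : Matrix.fromBlocks (X1 t * (X1 t₀)⁻¹)
            (-(X1 t * (X1 t₀)⁻¹ * (Y t₀ * (X2 t₀)⁻¹))) 0 0 * X t₀
          = X t * ((1 : Matrix (Fin (n-k) ⊕ Fin k) (Fin (n-k) ⊕ Fin k) ℝ)
              - Matrix.fromBlocks 0 0 0 (1 : Matrix (Fin k) (Fin k) ℝ)) := by
        rw [hproj, hXdef]
        show Matrix.fromBlocks (X1 t * (X1 t₀)⁻¹)
            (-(X1 t * (X1 t₀)⁻¹ * (Y t₀ * (X2 t₀)⁻¹))) 0 0 *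
            Matrix.fromBlocks (X1 t₀) (Y t₀) 0 (X2 t₀)
          = Matrix.fromBlocks (X1 t) (Y t) 0 (X2 t) * Matrix.fromBlocks 1 0 0 0
        rw [Matrix.fromBlocks_multiply, Matrix.fromBlocks_multiply]
        rw [Matrix.mul_assoc (X1 t) ((X1 t₀)⁻¹) (X1 t₀), Matrix.nonsing_inv_mul _ (hdet1 t₀ ht₀),
          Matrix.neg_mul (X1 t * (X1 t₀)⁻¹ * (Y t₀ * (X2 t₀)⁻¹)) (X2 t₀),
          Matrix.mul_assoc (X1 t * (X1 t₀)⁻¹) (Y t₀ * (X2 t₀)⁻¹) (X2 t₀),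
          Matrix.mul_assoc (Y t₀) ((X2 t₀)⁻¹) (X2 t₀),
          Matrix.nonsing_inv_mul _ (hdet2 t₀ ht₀)]
        simp
      calc X t * ((1 : Matrix (Fin (n-k) ⊕ Fin k) (Fin (n-k) ⊕ Fin k) ℝ)
            - Matrix.fromBlocks 0 0 0 (1 : Matrix (Fin k) (Fin k) ℝ)) * (X t₀)⁻¹
          = (Matrix.fromBlocks (X1 t * (X1 t₀)⁻¹)
              (-(X1 t * (X1 t₀)⁻¹ * (Y t₀ * (X2 t₀)⁻¹))) 0 0 * X t₀) * (X t₀)⁻¹ := by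
            rw [h1]
        _ = Matrix.fromBlocks (X1 t * (X1 t₀)⁻¹)
              (-(X1 t * (X1 t₀)⁻¹ * (Y t₀ * (X2 t₀)⁻¹))) 0 0 := by
            rw [Matrix.mul_assoc, Matrix.mul_nonsing_inv _ (hXudet t₀ ht₀), Matrix.mul_one]
    rw [hM]
    refine le_trans (hNbb _ _ _ _) ?_
    simp only [mnorm_zero, mnorm_neg]
    have b1 := hX1b t t₀ ht htt
    have b2 : mnorm (Y t₀ * (X2 t₀)⁻¹) ≤ CY := by
      have h := hYb t₀ t₀ ht₀ le_rfl
      simpa using h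
    have b3 : mnorm (X1 t * (X1 t₀)⁻¹ * (Y t₀ * (X2 t₀)⁻¹))
        ≤ (K * Real.exp (α * (t - t₀))) * CY := by
      refine le_trans (mnorm_mul_le _ _) ?_
      exact mul_le_mul b1 b2 (mnorm_nonneg _) (by positivity)
    have hexp : (0:ℝ) < Real.exp (α * (t - t₀)) := Real.exp_pos _
    calc Nb * (mnorm (X1 t * (X1 t₀)⁻¹) + mnorm (X1 t * (X1 t₀)⁻¹ * (Y t₀ * (X2 t₀)⁻¹)) + 0 + 0)
        = Nb * (mnorm (X1 t * (X1 t₀)⁻¹) + mnorm (X1 t * (X1 t₀)⁻¹ * (Y t₀ * (X2 t₀)⁻¹))) := by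
          ring
      _ ≤ Nb * (K * Real.exp (α * (t - t₀)) + (K * Real.exp (α * (t - t₀))) * CY) :=
          mul_le_mul_of_nonneg_left (by linarith) hNb0
      _ = (Nb * (K + K * CY)) * Real.exp (α * (t - t₀)) := by ring
      _ ≤ Kf * Real.exp (α * (t - t₀)) := by
          refine mul_le_mul_of_nonneg_right ?_ hexp.le
          rw [hKfdef]
          nlinarith [mul_nonneg hNb0 hCY0]

end
end

section
/- Let F₁₁ : J → ℝ^{(n−k)×(n−k)}, F₁₂ : J → ℝ^{(n−k)×k} and F₂₂ : J → ℝ^{k×k} be continuous and uniformly bounded, and suppose the systems ė₁ = F₁₁(t)e₁ and ė₂ = F₂₂(t)e₂ are each uniformly exponentially stable. Then the block upper triangular system ė(t) = [[F₁₁(t), F₁₂(t)], [0, F₂₂(t)]] e(t) is uniformly exponentially stable. -/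
noncomputable section

open Matrix Set

namespace BU

section MnormLemmas
open scoped Matrix.Norms.L2Operator

variable {m n l : Type*} [Fintype m] [Fintype n] [Fintype l]

lemma mnorm_eq [DecidableEq n] (M : Matrix m n ℝ) : mnorm M = ‖M‖ := by
  rw [Matrix.l2_opNorm_def]; rfl

lemma mnorm_nonneg [DecidableEq n] (M : Matrix m n ℝ) : 0 ≤ mnorm M := by
  rw [mnorm_eq]; exact norm_nonneg M

lemma mnorm_mul_le [DecidableEq n] [DecidableEq l] (A : Matrix m n ℝ) (B : Matrix n l ℝ) :
    mnorm (A * B) ≤ mnorm A * mnorm B := by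
  rw [mnorm_eq, mnorm_eq, mnorm_eq]; exact Matrix.l2_opNorm_mul A B

lemma mnorm_add_le [DecidableEq n] (A B : Matrix m n ℝ) :
    mnorm (A + B) ≤ mnorm A + mnorm B := by
  rw [mnorm_eq, mnorm_eq, mnorm_eq]; exact norm_add_le A B

lemma abs_le_enorm (y : EuclideanSpace ℝ m) (i : m) : |y i| ≤ ‖y‖ := by
  rw [EuclideanSpace.norm_eq]
  have h1 : |y i| = Real.sqrt (|y i| ^ 2) := (Real.sqrt_sq (abs_nonneg _)).symm
  rw [h1]
  apply Real.sqrt_le_sqrt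
  have : |y i| ^ 2 = ‖y i‖ ^ 2 := by rw [Real.norm_eq_abs]
  rw [this]
  exact Finset.single_le_sum (f := fun j => ‖y j‖ ^ 2) (fun j _ => by positivity) (Finset.mem_univ i)

lemma abs_entry_le_mnorm [DecidableEq n] (M : Matrix m n ℝ) (i : m) (j : n) :
    |M i j| ≤ mnorm M := by
  have hx : ‖(EuclideanSpace.single j (1:ℝ) : EuclideanSpace ℝ n)‖ = 1 := by
    rw [EuclideanSpace.norm_single]; norm_num
  have h := (LinearMap.toContinuousLinearMap (Matrix.toEuclideanLin M)).le_opNorm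
      (EuclideanSpace.single j (1:ℝ))
  rw [hx, mul_one] at h
  refine le_trans ?_ h
  have happ : (LinearMap.toContinuousLinearMap (Matrix.toEuclideanLin M))
      (EuclideanSpace.single j (1:ℝ)) = (Matrix.toEuclideanLin M) (EuclideanSpace.single j 1) := rfl
  rw [happ, Matrix.toEuclideanLin_apply]
  refine le_trans ?_ (abs_le_enorm _ i)
  apply le_of_eq
  congr 1
  show M i j = (M.mulVec ((WithLp.equiv 2 (n → ℝ)) (EuclideanSpace.single j 1))) i
  have : (WithLp.equiv 2 (n → ℝ)) (EuclideanSpace.single j (1:ℝ)) = Pi.single j 1 :=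
    PiLp.ofLp_single 2 j 1
  rw [this]
  simp [Matrix.mulVec_single]

lemma mnorm_le_sum [DecidableEq n] (M : Matrix m n ℝ) :
    mnorm M ≤ ∑ i, ∑ j, |M i j| := by
  apply ContinuousLinearMap.opNorm_le_bound _ (by positivity)
  intro x
  have hx : ∀ j, |x j| ≤ ‖x‖ := fun j => abs_le_enorm x j
  rw [LinearMap.coe_toContinuousLinearMap', Matrix.toEuclideanLin_apply]
  rw [EuclideanSpace.norm_eq]
  have hrow : ∀ i, |M.mulVec ((WithLp.equiv 2 (n → ℝ)) x) i| ≤ (∑ j, |M i j|) * ‖x‖ := by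
    intro i
    rw [Matrix.mulVec, dotProduct]
    calc |∑ j, M i j * x j| ≤ ∑ j, |M i j * x j| := Finset.abs_sum_le_sum_abs _ _
      _ ≤ ∑ j, |M i j| * ‖x‖ := by
          apply Finset.sum_le_sum; intro j _
          rw [abs_mul]
          exact mul_le_mul_of_nonneg_left (hx j) (abs_nonneg _)
      _ = (∑ j, |M i j|) * ‖x‖ := by rw [Finset.sum_mul]
  calc Real.sqrt (∑ i, ‖(WithLp.equiv 2 (m → ℝ)).symm (M.mulVec ((WithLp.equiv 2 (n → ℝ)) x)) i‖ ^ 2)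
      ≤ Real.sqrt (∑ i, ((∑ j, |M i j|) * ‖x‖) ^ 2) := by
        apply Real.sqrt_le_sqrt
        apply Finset.sum_le_sum
        intro i _
        apply pow_le_pow_left₀ (norm_nonneg _)
        rw [Real.norm_eq_abs]
        exact hrow i
    _ ≤ Real.sqrt ((∑ i, (∑ j, |M i j|) * ‖x‖) ^ 2) := by
        apply Real.sqrt_le_sqrt
        exact Finset.sum_sq_le_sq_sum_of_nonneg (fun i _ => by positivity)
    _ = ∑ i, (∑ j, |M i j|) * ‖x‖ := Real.sqrt_sq (by positivity)
    _ = (∑ i, ∑ j, |M i j|) * ‖x‖ := by rw [Finset.sum_mul]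

end MnormLemmas

section Gronwall

variable {m n : Type*} [Fintype m] [Fintype n]

lemma pin_entry_le (v : m → n → ℝ) (i : m) (j : n) : |v i j| ≤ ‖v‖ := by
  have h1 : ‖v i j‖ ≤ ‖v i‖ := norm_le_pi_norm (v i) j
  have h2 : ‖v i‖ ≤ ‖v‖ := norm_le_pi_norm v i
  rw [Real.norm_eq_abs] at h1
  exact h1.trans h2

lemma pin_le (v : m → n → ℝ) {c : ℝ} (hc : 0 ≤ c) (h : ∀ i j, |v i j| ≤ c) : ‖v‖ ≤ c := by
  rw [pi_norm_le_iff_of_nonneg hc]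
  intro i
  rw [pi_norm_le_iff_of_nonneg hc]
  intro j
  rw [Real.norm_eq_abs]
  exact h i j

lemma core_gron (V V' : ℝ → m → n → ℝ) {a b L ε δ : ℝ} (hL : 0 ≤ L) (hε : 0 ≤ ε)
    (hcont : ∀ i j, ContinuousOn (fun s => V s i j) (Icc a b))
    (hd : ∀ t ∈ Ico a b, ∀ i j, HasDerivWithinAt (fun s => V s i j) (V' t i j) (Ici t) t)
    (hb : ∀ t ∈ Ico a b, ∀ i j, |V' t i j| ≤ L * ‖V t‖ + ε)
    (ha : ‖V a‖ ≤ δ) :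
    ∀ t ∈ Icc a b, ‖V t‖ ≤ gronwallBound δ L ε (t - a) := by
  apply norm_le_gronwallBound_of_norm_deriv_right_le (f' := V')
  · rw [continuousOn_pi]; intro i; rw [continuousOn_pi]; intro j; exact hcont i j
  · intro t ht
    rw [hasDerivWithinAt_pi]; intro i; rw [hasDerivWithinAt_pi]; intro j
    exact hd t ht i j
  · exact ha
  · intro t ht
    have hnn : 0 ≤ L * ‖V t‖ + ε := by positivity
    exact pin_le _ hnn (hb t ht)

lemma mul_entry_bound (A : Matrix m m ℝ) (B : m → n → ℝ) {c : ℝ}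
    (hA : ∀ i j, |A i j| ≤ c) (i : m) (j : n) :
    |∑ l, A i l * B l j| ≤ (Fintype.card m) * c * ‖B‖ := by
  calc |∑ l, A i l * B l j| ≤ ∑ l, |A i l * B l j| := Finset.abs_sum_le_sum_abs _ _
    _ ≤ ∑ _l : m, c * ‖B‖ := by
        apply Finset.sum_le_sum
        intro l _
        rw [abs_mul]
        apply mul_le_mul (hA i l) (pin_entry_le B l j) (abs_nonneg _)
        exact (abs_nonneg (A i l)).trans (hA i l)
    _ = (Fintype.card m) * (c * ‖B‖) := by
        rw [Finset.sum_const, Finset.card_univ, nsmul_eq_mul]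
    _ = (Fintype.card m) * c * ‖B‖ := by ring

/-- Solutions of `V' = A V` vanishing at one time vanish identically on `[0, ∞)`. -/
lemma ode_zero (A : ℝ → Matrix m m ℝ) (V : ℝ → Matrix m n ℝ) {c : ℝ} (hc : 0 ≤ c)
    (hA : ∀ t ∈ Ici (0:ℝ), ∀ i j, |A t i j| ≤ c)
    (hd : ∀ t ∈ Ici (0:ℝ), ∀ i j,
      HasDerivWithinAt (fun s => V s i j) ((A t * V t) i j) (Ici (0:ℝ)) t)
    {t₀ : ℝ} (ht₀ : t₀ ∈ Ici (0:ℝ)) (h0 : V t₀ = 0) :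
    ∀ t ∈ Ici (0:ℝ), V t = 0 := by
  set L : ℝ := (Fintype.card m) * c with hLdef
  have hL : 0 ≤ L := by positivity
  have hVc : ∀ i j, ContinuousOn (fun s => V s i j) (Ici (0:ℝ)) := by
    intro i j t ht
    exact (hd t ht i j).continuousWithinAt
  intro t ht
  rcases le_or_gt t₀ t with hle | hlt
  · have key := core_gron (fun s => V s) (fun s => A s * V s) (δ := 0) (ε := 0) hL le_rfl
      (fun i j => (hVc i j).mono ((Icc_subset_Ici_iff hle).mpr ht₀))
      (fun s hs i j => (hd s (le_trans ht₀ hs.1) i j).mono (Ici_subset_Ici.mpr (le_trans ht₀ hs.1)))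
      ?_ ?_ t ⟨hle, le_rfl⟩
    · rw [gronwallBound_ε0_δ0] at key
      exact norm_le_zero_iff.mp key
    · intro s hs i j
      beta_reduce
      rw [add_zero, Matrix.mul_apply]
      exact mul_entry_bound (A s) (V s) (fun i j => hA s (le_trans ht₀ hs.1) i j) i j
    · beta_reduce
      rw [h0]; exact norm_zero.le
  · have htpos : (0:ℝ) ≤ t := ht
    set U : ℝ → Matrix m n ℝ := fun s => V (t + t₀ - s) with hU
    have hinner : ∀ s : ℝ, HasDerivAt (fun u : ℝ => t + t₀ - u) (-1) s := by
      intro s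
      simpa using (hasDerivAt_id s).const_sub (t + t₀)
    have hkey := core_gron (fun s => U s) (fun s => -(A (t + t₀ - s) * V (t + t₀ - s)))
      (a := t) (b := t₀) (δ := 0) (ε := 0) hL le_rfl ?_ ?_ ?_ ?_ t₀ ⟨le_of_lt hlt, le_rfl⟩
    · rw [gronwallBound_ε0_δ0] at hkey
      have : U t₀ = 0 := norm_le_zero_iff.mp hkey
      simpa [hU] using this
    · intro i j
      have : ContinuousOn (fun u : ℝ => t + t₀ - u) (Icc t t₀) := (Continuous.continuousOn (by continuity))
      apply ContinuousOn.comp (hVc i j) this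
      intro s hs
      simp only [mem_Ici]
      linarith [hs.1, hs.2, htpos]
    · intro s hs i j
      have hu0 : (0:ℝ) < t + t₀ - s := by
        rcases hs with ⟨h1, h2⟩
        linarith
      have hDA : HasDerivAt (fun u => V u i j) ((A (t + t₀ - s) * V (t + t₀ - s)) i j) (t + t₀ - s) :=
        (hd (t + t₀ - s) (le_of_lt hu0) i j).hasDerivAt (Ici_mem_nhds hu0)
      have := (hDA.comp s (hinner s))
      have h2 : HasDerivAt (fun u : ℝ => V (t + t₀ - u) i j)
          (-((A (t + t₀ - s) * V (t + t₀ - s)) i j)) s := by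
        rw [mul_neg_one] at this
        exact this
      exact (h2.hasDerivWithinAt)
    · intro s hs i j
      beta_reduce
      rw [add_zero, Matrix.neg_apply, abs_neg, Matrix.mul_apply]
      show _ ≤ L * ‖show m → n → ℝ from U s‖
      rw [hU]
      beta_reduce
      exact mul_entry_bound (A (t + t₀ - s)) (V (t + t₀ - s))
        (fun i j => hA (t + t₀ - s) (by rcases hs with ⟨h1,h2⟩; simp only [mem_Ici]; linarith) i j) i j
    · beta_reduce
      have h3 : U t = 0 := by simp [hU, h0]
      rw [h3]; exact norm_zero.le

/-- Forward Gronwall bound for `V' = A V + W`, `V t₀ = 0`. -/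
lemma ode_bound (A : ℝ → Matrix m m ℝ) (W V : ℝ → Matrix m n ℝ) {c w : ℝ}
    (hc : 0 ≤ c) (hw : 0 ≤ w) {t₀ t₁ : ℝ} (ht₀ : t₀ ∈ Ici (0:ℝ))
    (hA : ∀ t ∈ Ici (0:ℝ), ∀ i j, |A t i j| ≤ c)
    (hW : ∀ t ∈ Icc t₀ t₁, ∀ i j, |W t i j| ≤ w)
    (hd : ∀ t ∈ Ici (0:ℝ), ∀ i j,
      HasDerivWithinAt (fun s => V s i j) ((A t * V t + W t) i j) (Ici (0:ℝ)) t)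
    (h0 : V t₀ = 0) :
    ∀ t ∈ Icc t₀ t₁, ∀ i j,
      |V t i j| ≤ gronwallBound 0 (↑(Fintype.card m) * c) w (t - t₀) := by
  set L : ℝ := ↑(Fintype.card m) * c with hLdef
  have hL : 0 ≤ L := by positivity
  have hVc : ∀ i j, ContinuousOn (fun s => V s i j) (Ici (0:ℝ)) :=
    fun i j s hs => (hd s hs i j).continuousWithinAt
  intro t ht i j
  have key := core_gron (fun s => V s) (fun s => A s * V s + W s)
      (a := t₀) (b := t₁) (δ := 0) hL hw ?_ ?_ ?_ ?_ t ht
  · exact le_trans (pin_entry_le (show m → n → ℝ from V t) i j) key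
  · intro i j
    exact (hVc i j).mono (fun x hx => le_trans ht₀ hx.1)
  · intro s hs i j
    exact (hd s (le_trans ht₀ hs.1) i j).mono (Ici_subset_Ici.mpr (le_trans ht₀ hs.1))
  · intro s hs i j
    beta_reduce
    rw [Matrix.add_apply]
    refine le_trans (abs_add_le _ _) ?_
    have h1 : |(A s * V s) i j| ≤ L * ‖show m → n → ℝ from V s‖ := by
      rw [Matrix.mul_apply]
      exact mul_entry_bound (A s) (V s) (fun i j => hA s (le_trans ht₀ hs.1) i j) i j
    have h2 : |W s i j| ≤ w := hW s ⟨hs.1, le_of_lt hs.2⟩ i j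
    exact add_le_add h1 h2
  · beta_reduce
    rw [h0]; exact norm_zero.le

lemma gron_mono {K w : ℝ} (hK : 0 ≤ K) (hw : 0 ≤ w) {x y : ℝ} (hxy : x ≤ y) :
    gronwallBound 0 K w x ≤ gronwallBound 0 K w y := by
  rcases eq_or_lt_of_le hK with h0 | hpos
  · rw [← h0, gronwallBound_K0]
    simp only [zero_add]
    nlinarith
  · rw [gronwallBound_of_K_ne_0 (ne_of_gt hpos)]
    simp only [zero_mul, zero_add]
    have hexp : Real.exp (K*x) ≤ Real.exp (K*y) := Real.exp_le_exp.mpr (by nlinarith)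
    have hd : 0 ≤ w / K := by positivity
    nlinarith

lemma gron_nonneg {K w x : ℝ} (hK : 0 ≤ K) (hw : 0 ≤ w) (hx : 0 ≤ x) :
    0 ≤ gronwallBound 0 K w x := by
  have := gron_mono hK hw hx
  rwa [gronwallBound_x0] at this

end Gronwall

end BU

set_option maxHeartbeats 2000000 in
/-- A block upper triangular system whose diagonal blocks are uniformly exponentially
stable is uniformly exponentially stable. -/
theorem block_triangular_UES
    (n k : ℕ)
    (F11 : ℝ → Matrix (Fin (n - k)) (Fin (n - k)) ℝ)
    (F12 : ℝ → Matrix (Fin (n - k)) (Fin k) ℝ)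
    (F22 : ℝ → Matrix (Fin k) (Fin k) ℝ)
    (hF11 : ContinuousOnJ F11 ∧ UnifBdd F11)
    (hF12 : ContinuousOnJ F12 ∧ UnifBdd F12)
    (hF22 : ContinuousOnJ F22 ∧ UnifBdd F22)
    (h1 : SysUES F11) (h2 : SysUES F22) :
    SysUES (fun t => Matrix.fromBlocks (F11 t) (F12 t) 0 (F22 t)) := by
  obtain ⟨-, a11, ha11⟩ := hF11
  obtain ⟨-, a12, ha12⟩ := hF12
  obtain ⟨-, a22, ha22⟩ := hF22
  obtain ⟨K₁, hK₁, μ₁, hμ₁, hb1⟩ := h1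
  obtain ⟨K₂, hK₂, μ₂, hμ₂, hb2⟩ := h2
  have ha11n : 0 ≤ a11 := le_trans (BU.mnorm_nonneg _) (ha11 0 self_mem_Ici)
  have ha12n : 0 ≤ a12 := le_trans (BU.mnorm_nonneg _) (ha12 0 self_mem_Ici)
  have ha22n : 0 ≤ a22 := le_trans (BU.mnorm_nonneg _) (ha22 0 self_mem_Ici)
  have hK₁0 : (0:ℝ) < K₁ := lt_of_lt_of_le one_pos hK₁
  have hK₂0 : (0:ℝ) < K₂ := lt_of_lt_of_le one_pos hK₂
  have hσex : ∃ σ : ℝ, 0 < σ ∧ Real.exp (-μ₁ * σ) ≤ 1/4 ∧ K₂ * Real.exp (-μ₂ * σ) ≤ 1/4 := by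
    refine ⟨max (Real.log 4 / μ₁) (Real.log (4 * K₂) / μ₂) + 1, ?_, ?_, ?_⟩
    · have hlog4 : (0:ℝ) ≤ Real.log 4 := Real.log_nonneg (by norm_num)
      have h0 : 0 ≤ Real.log 4 / μ₁ := div_nonneg hlog4 hμ₁.le
      have := le_max_left (Real.log 4 / μ₁) (Real.log (4 * K₂) / μ₂)
      linarith
    · have h0 : Real.log 4 / μ₁ ≤ max (Real.log 4 / μ₁) (Real.log (4 * K₂) / μ₂) + 1 := by
        have := le_max_left (Real.log 4 / μ₁) (Real.log (4 * K₂) / μ₂)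
        linarith
      rw [div_le_iff₀ hμ₁] at h0
      have hle : Real.log 4 ≤ μ₁ * (max (Real.log 4 / μ₁) (Real.log (4 * K₂) / μ₂) + 1) := by
        linarith [h0]
      have h2 : Real.exp (-μ₁ * (max (Real.log 4 / μ₁) (Real.log (4 * K₂) / μ₂) + 1))
          ≤ Real.exp (-(Real.log 4)) := Real.exp_le_exp.mpr (by linarith)
      rw [Real.exp_neg, Real.exp_log (by norm_num : (0:ℝ) < 4)] at h2
      linarith
    · have h0 : Real.log (4*K₂) / μ₂ ≤ max (Real.log 4 / μ₁) (Real.log (4 * K₂) / μ₂) + 1 := by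
        have := le_max_right (Real.log 4 / μ₁) (Real.log (4 * K₂) / μ₂)
        linarith
      rw [div_le_iff₀ hμ₂] at h0
      have hle : Real.log (4*K₂) ≤ μ₂ * (max (Real.log 4 / μ₁) (Real.log (4 * K₂) / μ₂) + 1) := by
        linarith [h0]
      have h2 : Real.exp (-μ₂ * (max (Real.log 4 / μ₁) (Real.log (4 * K₂) / μ₂) + 1))
          ≤ Real.exp (-(Real.log (4*K₂))) := Real.exp_le_exp.mpr (by linarith)
      rw [Real.exp_neg, Real.exp_log (by positivity)] at h2
      have h4 : K₂ * Real.exp (-μ₂ * (max (Real.log 4 / μ₁) (Real.log (4 * K₂) / μ₂) + 1))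
          ≤ K₂ * (4*K₂)⁻¹ := mul_le_mul_of_nonneg_left h2 hK₂0.le
      have h5 : K₂ * (4*K₂)⁻¹ = 1/4 := by field_simp
      linarith
  obtain ⟨σ, hσpos, hq1, hq2⟩ := hσex
  set cp : ℝ := (Fintype.card (Fin (n - k)) : ℝ) with hcp
  set cq : ℝ := (Fintype.card (Fin k) : ℝ) with hcq
  have hcpn : 0 ≤ cp := Nat.cast_nonneg _
  have hcqn : 0 ≤ cq := Nat.cast_nonneg _
  set L : ℝ := cp * a11 with hLdef
  set w : ℝ := cq * (a12 * K₂) with hwdef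
  have hLn : 0 ≤ L := mul_nonneg hcpn ha11n
  have hwn : 0 ≤ w := mul_nonneg hcqn (mul_nonneg ha12n hK₂0.le)
  set gB : ℝ := gronwallBound 0 L w σ with hgBdef
  have hgBn : 0 ≤ gB := BU.gron_nonneg hLn hwn hσpos.le
  set C₀ : ℝ := cp * cq * gB with hC₀def
  have hC₀n : 0 ≤ C₀ := mul_nonneg (mul_nonneg hcpn hcqn) hgBn
  set C : ℝ := 4*K₁*C₀ + C₀ + 1 with hCdef
  have hC0 : 0 < C := by
    have h4 : 0 ≤ 4*K₁*C₀ := mul_nonneg (mul_nonneg (by norm_num) hK₁0.le) hC₀n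
    rw [hCdef]; linarith
  set ν : ℝ := Real.log 2 / σ with hνdef
  have hνpos : 0 < ν := div_pos (Real.log_pos (by norm_num)) hσpos
  set μ : ℝ := min μ₁ (min μ₂ ν) with hμdef
  set Kf : ℝ := cp*cp*K₁ + cp*cq*(2*C) + cq*cq*K₂ + 1 with hKfdef
  have hμpos : 0 < μ := lt_min hμ₁ (lt_min hμ₂ hνpos)
  refine ⟨Kf, ?_, μ, hμpos, ?_⟩
  · have g1 : 0 ≤ cp*cp*K₁ := mul_nonneg (mul_nonneg hcpn hcpn) hK₁0.le
    have g2 : 0 ≤ cp*cq*(2*C) := mul_nonneg (mul_nonneg hcpn hcqn) (by linarith)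
    have g3 : 0 ≤ cq*cq*K₂ := mul_nonneg (mul_nonneg hcqn hcqn) hK₂0.le
    rw [hKfdef]; linarith
  intro Φ hΦ t₀ ht₀ t hlet
  obtain ⟨hΦ1, hΦd⟩ := hΦ
  -- block structure of F * Φ
  have hmul : ∀ u τ : ℝ, Matrix.fromBlocks (F11 u) (F12 u) 0 (F22 u) * Φ u τ =
      Matrix.fromBlocks
        (F11 u * (Φ u τ).toBlocks₁₁ + F12 u * (Φ u τ).toBlocks₂₁)
        (F11 u * (Φ u τ).toBlocks₁₂ + F12 u * (Φ u τ).toBlocks₂₂)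
        (F22 u * (Φ u τ).toBlocks₂₁) (F22 u * (Φ u τ).toBlocks₂₂) := by
    intro u τ
    conv_lhs => rw [← Matrix.fromBlocks_toBlocks (Φ u τ)]
    rw [Matrix.fromBlocks_multiply]
    rw [Matrix.zero_mul, Matrix.zero_mul, zero_add, zero_add]
  have hone : ∀ τ ∈ Ici (0:ℝ), (Φ τ τ).toBlocks₁₁ = 1 ∧ (Φ τ τ).toBlocks₁₂ = 0 ∧
      (Φ τ τ).toBlocks₂₁ = 0 ∧ (Φ τ τ).toBlocks₂₂ = 1 := by
    intro τ hτ
    rw [hΦ1 τ hτ, ← Matrix.fromBlocks_one]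
    exact ⟨Matrix.toBlocks_fromBlocks₁₁ _ _ _ _, Matrix.toBlocks_fromBlocks₁₂ _ _ _ _,
      Matrix.toBlocks_fromBlocks₂₁ _ _ _ _, Matrix.toBlocks_fromBlocks₂₂ _ _ _ _⟩
  -- entry bounds
  have hE11 : ∀ u ∈ Ici (0:ℝ), ∀ i j, |F11 u i j| ≤ a11 :=
    fun u hu i j => le_trans (BU.abs_entry_le_mnorm _ i j) (ha11 u hu)
  have hE12 : ∀ u ∈ Ici (0:ℝ), ∀ i j, |F12 u i j| ≤ a12 :=
    fun u hu i j => le_trans (BU.abs_entry_le_mnorm _ i j) (ha12 u hu)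
  have hE22 : ∀ u ∈ Ici (0:ℝ), ∀ i j, |F22 u i j| ≤ a22 :=
    fun u hu i j => le_trans (BU.abs_entry_le_mnorm _ i j) (ha22 u hu)
  have hFent : ∀ u ∈ Ici (0:ℝ), ∀ I J,
      |Matrix.fromBlocks (F11 u) (F12 u) (0 : Matrix (Fin k) (Fin (n-k)) ℝ) (F22 u) I J|
        ≤ a11 + a12 + a22 := by
    intro u hu I J
    rcases I with i | i <;> rcases J with j | j
    · simp only [Matrix.fromBlocks_apply₁₁]
      have := hE11 u hu i j; linarith
    · simp only [Matrix.fromBlocks_apply₁₂]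
      have := hE12 u hu i j; linarith
    · simp only [Matrix.fromBlocks_apply₂₁, Matrix.zero_apply, abs_zero]
      linarith
    · simp only [Matrix.fromBlocks_apply₂₂]
      have := hE22 u hu i j; linarith
  -- derivative of block 22
  have hd22 : ∀ τ ∈ Ici (0:ℝ), ∀ u ∈ Ici (0:ℝ), ∀ i j,
      HasDerivWithinAt (fun s => (Φ s τ).toBlocks₂₂ i j)
        ((F22 u * (Φ u τ).toBlocks₂₂) i j) (Ici (0:ℝ)) u := by
    intro τ hτ u hu i j
    have h := hΦd τ hτ u hu (Sum.inr i) (Sum.inr j)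
    beta_reduce at h
    rw [hmul u τ, Matrix.fromBlocks_apply₂₂] at h
    exact h
  have hΨ₂ : IsStateTransition F22 (fun u τ => (Φ u τ).toBlocks₂₂) :=
    ⟨fun τ hτ => (hone τ hτ).2.2.2, fun τ hτ u hu i j => hd22 τ hτ u hu i j⟩
  have hB22bnd := hb2 _ hΨ₂
  -- block 21 vanishes
  have hd21 : ∀ τ ∈ Ici (0:ℝ), ∀ u ∈ Ici (0:ℝ), ∀ i j,
      HasDerivWithinAt (fun s => (Φ s τ).toBlocks₂₁ i j)
        ((F22 u * (Φ u τ).toBlocks₂₁) i j) (Ici (0:ℝ)) u := by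
    intro τ hτ u hu i j
    have h := hΦd τ hτ u hu (Sum.inr i) (Sum.inl j)
    beta_reduce at h
    rw [hmul u τ, Matrix.fromBlocks_apply₂₁] at h
    exact h
  have hB21z : ∀ τ ∈ Ici (0:ℝ), ∀ u ∈ Ici (0:ℝ), (Φ u τ).toBlocks₂₁ = 0 := by
    intro τ hτ
    exact BU.ode_zero F22 (fun u => (Φ u τ).toBlocks₂₁) ha22n hE22
      (fun u hu i j => hd21 τ hτ u hu i j) hτ ((hone τ hτ).2.2.1)
  -- block 11 is a state transition of F11
  have hd11 : ∀ τ ∈ Ici (0:ℝ), ∀ u ∈ Ici (0:ℝ), ∀ i j,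
      HasDerivWithinAt (fun s => (Φ s τ).toBlocks₁₁ i j)
        ((F11 u * (Φ u τ).toBlocks₁₁) i j) (Ici (0:ℝ)) u := by
    intro τ hτ u hu i j
    have h := hΦd τ hτ u hu (Sum.inl i) (Sum.inl j)
    beta_reduce at h
    rw [hmul u τ, Matrix.fromBlocks_apply₁₁, hB21z τ hτ u hu, Matrix.mul_zero, add_zero] at h
    exact h
  have hΨ₁ : IsStateTransition F11 (fun u τ => (Φ u τ).toBlocks₁₁) :=
    ⟨fun τ hτ => (hone τ hτ).1, fun τ hτ u hu i j => hd11 τ hτ u hu i j⟩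
  have hB11bnd := hb1 _ hΨ₁
  -- block 12 derivative
  have hd12 : ∀ τ ∈ Ici (0:ℝ), ∀ u ∈ Ici (0:ℝ), ∀ i j,
      HasDerivWithinAt (fun s => (Φ s τ).toBlocks₁₂ i j)
        ((F11 u * (Φ u τ).toBlocks₁₂ + F12 u * (Φ u τ).toBlocks₂₂) i j) (Ici (0:ℝ)) u := by
    intro τ hτ u hu i j
    have h := hΦd τ hτ u hu (Sum.inl i) (Sum.inr j)
    beta_reduce at h
    rw [hmul u τ, Matrix.fromBlocks_apply₁₂] at h
    exact h
  -- local bound for block 12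
  have hloc : ∀ τ ∈ Ici (0:ℝ), ∀ u, τ ≤ u → u ≤ τ + σ →
      mnorm ((Φ u τ).toBlocks₁₂) ≤ C₀ := by
    intro τ hτ u h1u h2u
    have hWent : ∀ s ∈ Icc τ (τ + σ), ∀ i j, |(F12 s * (Φ s τ).toBlocks₂₂) i j| ≤ w := by
      intro s hs i j
      have hsIci : s ∈ Ici (0:ℝ) := le_trans hτ hs.1
      rw [Matrix.mul_apply]
      have hent : ∀ l, |(Φ s τ).toBlocks₂₂ l j| ≤ K₂ := by
        intro l
        refine le_trans (BU.abs_entry_le_mnorm _ l j)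
          (le_trans (hB22bnd τ hτ s hs.1) ?_)
        have hee : Real.exp (-μ₂ * (s - τ)) ≤ 1 := by
          rw [Real.exp_le_one_iff]
          have h9 : 0 ≤ μ₂ * (s - τ) := mul_nonneg hμ₂.le (by linarith [hs.1])
          linarith
        calc K₂ * Real.exp (-μ₂ * (s - τ)) ≤ K₂ * 1 :=
              mul_le_mul_of_nonneg_left hee hK₂0.le
          _ = K₂ := mul_one K₂
      calc |∑ l, F12 s i l * (Φ s τ).toBlocks₂₂ l j|
          ≤ ∑ l, |F12 s i l * (Φ s τ).toBlocks₂₂ l j| := Finset.abs_sum_le_sum_abs _ _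
        _ ≤ ∑ _l : Fin k, a12 * K₂ := by
            apply Finset.sum_le_sum
            intro l _
            rw [abs_mul]
            exact mul_le_mul (hE12 s hsIci i l) (hent l) (abs_nonneg _) ha12n
        _ = w := by
            rw [Finset.sum_const, Finset.card_univ, nsmul_eq_mul, hwdef, hcq]
    have hent := BU.ode_bound F11 (fun s => F12 s * (Φ s τ).toBlocks₂₂)
      (fun s => (Φ s τ).toBlocks₁₂) ha11n hwn hτ hE11 hWent
      (fun s hs i j => hd12 τ hτ s hs i j) ((hone τ hτ).2.1) u ⟨h1u, h2u⟩
    calc mnorm ((Φ u τ).toBlocks₁₂) ≤ ∑ i, ∑ j, |(Φ u τ).toBlocks₁₂ i j| :=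
          BU.mnorm_le_sum _
      _ ≤ ∑ _i : Fin (n-k), ∑ _j : Fin k, gronwallBound 0 L w (u - τ) := by
          apply Finset.sum_le_sum
          intro i _
          apply Finset.sum_le_sum
          intro j _
          exact hent i j
      _ = cp * (cq * gronwallBound 0 L w (u - τ)) := by
          rw [Finset.sum_const, Finset.sum_const, Finset.card_univ, Finset.card_univ,
            nsmul_eq_mul, nsmul_eq_mul, hcp, hcq]
      _ ≤ cp * (cq * gB) := by
          have hg := BU.gron_mono hLn hwn (by linarith : u - τ ≤ σ)
          rw [← hgBdef] at hg
          exact mul_le_mul_of_nonneg_left (mul_le_mul_of_nonneg_left hg hcqn) hcpn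
      _ = C₀ := by rw [hC₀def]; ring
  -- cocycle property
  have hcoc : ∀ s ∈ Ici (0:ℝ), ∀ τ ∈ Ici (0:ℝ), ∀ u ∈ Ici (0:ℝ),
      Φ u s * Φ s τ = Φ u τ := by
    intro s hs τ hτ
    have hder : ∀ u ∈ Ici (0:ℝ), ∀ I J,
        HasDerivWithinAt (fun v => (Φ v s * Φ s τ - Φ v τ) I J)
          ((Matrix.fromBlocks (F11 u) (F12 u) 0 (F22 u) * (Φ u s * Φ s τ - Φ u τ)) I J)
          (Ici (0:ℝ)) u := by
      intro u hu I J
      have d1 := HasDerivWithinAt.sum (u := Finset.univ)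
        (fun l (_ : l ∈ Finset.univ) => (hΦd s hs u hu I l).mul_const (Φ s τ l J))
      have d2 := hΦd τ hτ u hu I J
      beta_reduce at d1 d2
      have d3 := d1.sub d2
      simp only [Matrix.mul_sub, Matrix.sub_apply, Matrix.mul_apply] at d3 ⊢
      convert d3 using 2
      case e'_8 =>
        simp only [Pi.sub_apply, Finset.sum_apply]
      case e'_9 =>
        simp only [mul_sub, Finset.mul_sum, Finset.sum_sub_distrib, Finset.sum_mul, mul_assoc]
        rw [Finset.sum_comm]
      all_goals rfl
    have h0 : Φ s s * Φ s τ - Φ s τ = 0 := by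
      rw [hΦ1 s hs, Matrix.one_mul, sub_self]
    have hz := BU.ode_zero (fun u => Matrix.fromBlocks (F11 u) (F12 u) 0 (F22 u))
      (fun u => Φ u s * Φ s τ - Φ u τ) (c := a11 + a12 + a22) (by linarith)
      (fun u hu I J => hFent u hu I J) hder hs h0
    intro u hu
    exact sub_eq_zero.mp (hz u hu)
  -- splitting identity for block 12
  have hsplit : ∀ s ∈ Ici (0:ℝ), ∀ τ ∈ Ici (0:ℝ), ∀ u ∈ Ici (0:ℝ),
      (Φ u τ).toBlocks₁₂ = (Φ u s).toBlocks₁₁ * (Φ s τ).toBlocks₁₂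
        + (Φ u s).toBlocks₁₂ * (Φ s τ).toBlocks₂₂ := by
    intro s hs τ hτ u hu
    conv_lhs => rw [← hcoc s hs τ hτ u hu]
    conv_lhs => rw [← Matrix.fromBlocks_toBlocks (Φ u s), ← Matrix.fromBlocks_toBlocks (Φ s τ)]
    rw [Matrix.fromBlocks_multiply, Matrix.toBlocks_fromBlocks₁₂]
  -- geometric decay by induction
  have hstep : ∀ M : ℕ, ∀ τ, 0 ≤ τ → ∀ u, τ + (M:ℝ)*σ ≤ u → u ≤ τ + ((M:ℝ)+1)*σ →
      mnorm ((Φ u τ).toBlocks₁₂) ≤ C * (1/2)^M := by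
    intro M
    induction M with
    | zero =>
      intro τ hτ u hl hu
      push_cast at hl hu
      have hb := hloc τ hτ u (by linarith) (by linarith)
      have h4 : 0 ≤ 4*K₁*C₀ := by positivity
      simp only [pow_zero, mul_one]
      rw [hCdef]; linarith
    | succ M ih =>
      intro τ hτ u hl hu
      push_cast at hl hu
      have hM0 : (0:ℝ) ≤ (M:ℝ) := Nat.cast_nonneg M
      have hs0 : (0:ℝ) ≤ τ + σ := by linarith
      have hsu : τ + σ ≤ u := by linarith [mul_nonneg hM0 hσpos.le]
      have hu0 : (0:ℝ) ≤ u := by linarith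
      have hid := hsplit (τ+σ) hs0 τ hτ u hu0
      have hIH := ih (τ+σ) hs0 u (by push_cast; linarith) (by push_cast; linarith)
      have hA : mnorm ((Φ u (τ+σ)).toBlocks₁₁) ≤ K₁ * Real.exp (-μ₁ * (u - (τ+σ))) :=
        hB11bnd (τ+σ) hs0 u hsu
      have hBl : mnorm ((Φ (τ+σ) τ).toBlocks₁₂) ≤ C₀ :=
        hloc τ hτ (τ+σ) (by linarith) (by linarith)
      have hD : mnorm ((Φ (τ+σ) τ).toBlocks₂₂) ≤ K₂ * Real.exp (-μ₂ * σ) := by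
        have hh := hB22bnd τ hτ (τ+σ) (by linarith)
        have : -μ₂ * (τ + σ - τ) = -μ₂ * σ := by ring
        rwa [this] at hh
      have hexp1 : Real.exp (-μ₁ * (u - (τ+σ))) ≤ (1/4)^M := by
        have h1 : (M:ℝ)*σ ≤ u - (τ+σ) := by linarith
        have h2 : Real.exp (-μ₁*(u-(τ+σ))) ≤ Real.exp ((M:ℝ) * (-μ₁*σ)) := by
          apply Real.exp_le_exp.mpr
          have h3 := mul_le_mul_of_nonneg_left h1 hμ₁.le
          nlinarith [h3]
        refine h2.trans ?_
        rw [Real.exp_nat_mul]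
        exact pow_le_pow_left₀ (Real.exp_nonneg _) hq1 M
      have hIHn : 0 ≤ C * (1/2)^M := mul_nonneg hC0.le (by positivity)
      calc mnorm ((Φ u τ).toBlocks₁₂)
          ≤ mnorm ((Φ u (τ+σ)).toBlocks₁₁ * (Φ (τ+σ) τ).toBlocks₁₂)
            + mnorm ((Φ u (τ+σ)).toBlocks₁₂ * (Φ (τ+σ) τ).toBlocks₂₂) := by
            rw [hid]; exact BU.mnorm_add_le _ _
        _ ≤ mnorm ((Φ u (τ+σ)).toBlocks₁₁) * mnorm ((Φ (τ+σ) τ).toBlocks₁₂)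
            + mnorm ((Φ u (τ+σ)).toBlocks₁₂) * mnorm ((Φ (τ+σ) τ).toBlocks₂₂) :=
            add_le_add (BU.mnorm_mul_le _ _) (BU.mnorm_mul_le _ _)
        _ ≤ (K₁ * (1/4)^M) * C₀ + (C * (1/2)^M) * (K₂ * Real.exp (-μ₂*σ)) := by
            apply add_le_add
            · apply mul_le_mul ?_ hBl (BU.mnorm_nonneg _) (mul_nonneg hK₁0.le (by positivity))
              calc mnorm ((Φ u (τ+σ)).toBlocks₁₁) ≤ K₁ * Real.exp (-μ₁*(u-(τ+σ))) := hA
                _ ≤ K₁ * (1/4)^M := mul_le_mul_of_nonneg_left hexp1 hK₁0.le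
            · exact mul_le_mul hIH hD (BU.mnorm_nonneg _) hIHn
        _ ≤ C * (1/2)^(M+1) := by
            have e1 : ((1:ℝ)/4)^M ≤ (1/2)^M := pow_le_pow_left₀ (by norm_num) (by norm_num) M
            have hx : (0:ℝ) ≤ (1/2:ℝ)^M := by positivity
            have h6 : (C * (1/2)^M) * (K₂ * Real.exp (-μ₂*σ)) ≤ (C*(1/2)^M) * (1/4) :=
              mul_le_mul_of_nonneg_left hq2 hIHn
            have h7 : 4*(K₁*C₀) + C₀ + 1 = C := by rw [hCdef]; ring
            have h8 : (K₁ * (1/4)^M) * C₀ ≤ (K₁*C₀) * (1/2)^M := by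
              have := mul_le_mul_of_nonneg_left e1 (mul_nonneg hK₁0.le hC₀n)
              calc (K₁ * (1/4)^M) * C₀ = (K₁*C₀) * (1/4)^M := by ring
                _ ≤ (K₁*C₀) * (1/2)^M := this
            have hcoef : K₁*C₀ + C/4 ≤ C/2 := by linarith
            calc (K₁ * (1/4)^M) * C₀ + (C * (1/2)^M) * (K₂ * Real.exp (-μ₂*σ))
                ≤ (K₁*C₀) * (1/2)^M + (C*(1/2)^M) * (1/4) := add_le_add h8 h6
              _ = (K₁*C₀ + C/4) * (1/2)^M := by ring
              _ ≤ (C/2) * (1/2)^M := mul_le_mul_of_nonneg_right hcoef hx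
              _ = C * (1/2)^(M+1) := by rw [pow_succ]; ring
  -- exponential decay of block 12
  have hfin12 : ∀ τ, 0 ≤ τ → ∀ u, τ ≤ u →
      mnorm ((Φ u τ).toBlocks₁₂) ≤ 2*C*Real.exp (-ν*(u-τ)) := by
    intro τ hτ u hu
    set M : ℕ := ⌊(u - τ)/σ⌋₊ with hM
    have hd0 : 0 ≤ (u-τ)/σ := div_nonneg (by linarith) hσpos.le
    have h1 : (M:ℝ) ≤ (u-τ)/σ := Nat.floor_le hd0
    have h2 : (u-τ)/σ < (M:ℝ) + 1 := Nat.lt_floor_add_one _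
    have hl : τ + (M:ℝ)*σ ≤ u := by
      have := (le_div_iff₀ hσpos).mp h1
      linarith
    have hu2 : u ≤ τ + ((M:ℝ)+1)*σ := by
      have := (div_lt_iff₀ hσpos).mp h2
      linarith
    refine le_trans (hstep M τ hτ u hl hu2) ?_
    have hlog2 : (0:ℝ) < Real.log 2 := Real.log_pos (by norm_num)
    have hhalf : ((1:ℝ)/2)^M = Real.exp ((M:ℝ) * (-(Real.log 2))) := by
      rw [Real.exp_nat_mul, Real.exp_neg, Real.exp_log (by norm_num : (0:ℝ) < 2)]
      norm_num
    have hexp : Real.exp ((M:ℝ) * (-(Real.log 2))) ≤ 2 * Real.exp (-ν*(u-τ)) := by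
      have h8 : ν * (u - τ) ≤ Real.log 2 * ((M:ℝ)+1) := by
        rw [hνdef, div_mul_eq_mul_div, div_le_iff₀ hσpos]
        have h9 : u - τ ≤ ((M:ℝ)+1)*σ := by linarith
        have h10 := mul_le_mul_of_nonneg_left h9 hlog2.le
        nlinarith [h10]
      calc Real.exp ((M:ℝ) * (-(Real.log 2)))
          ≤ Real.exp (Real.log 2 + -ν*(u-τ)) := Real.exp_le_exp.mpr (by linarith)
        _ = 2 * Real.exp (-ν*(u-τ)) := by
            rw [Real.exp_add, Real.exp_log (by norm_num : (0:ℝ) < 2)]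
    calc C * (1/2)^M = C * Real.exp ((M:ℝ) * (-(Real.log 2))) := by rw [hhalf]
      _ ≤ C * (2*Real.exp (-ν*(u-τ))) := mul_le_mul_of_nonneg_left hexp hC0.le
      _ = 2*C*Real.exp (-ν*(u-τ)) := by ring
  -- final assembly
  have htI : (0:ℝ) ≤ t := le_trans ht₀ hlet
  have hdtn : 0 ≤ t - t₀ := by linarith
  have hμ1 : μ ≤ μ₁ := min_le_left _ _
  have hμ2 : μ ≤ μ₂ := le_trans (min_le_right _ _) (min_le_left _ _)
  have hμν : μ ≤ ν := le_trans (min_le_right _ _) (min_le_right _ _)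
  have hEpos : 0 < Real.exp (-μ*(t-t₀)) := Real.exp_pos _
  have hexpμ1 : Real.exp (-μ₁*(t-t₀)) ≤ Real.exp (-μ*(t-t₀)) :=
    Real.exp_le_exp.mpr (by linarith [mul_le_mul_of_nonneg_right hμ1 hdtn])
  have hexpμ2 : Real.exp (-μ₂*(t-t₀)) ≤ Real.exp (-μ*(t-t₀)) :=
    Real.exp_le_exp.mpr (by linarith [mul_le_mul_of_nonneg_right hμ2 hdtn])
  have hexpμν : Real.exp (-ν*(t-t₀)) ≤ Real.exp (-μ*(t-t₀)) :=
    Real.exp_le_exp.mpr (by linarith [mul_le_mul_of_nonneg_right hμν hdtn])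
  have e11 : ∀ i j, |Φ t t₀ (Sum.inl i) (Sum.inl j)| ≤ K₁ * Real.exp (-μ*(t-t₀)) := by
    intro i j
    refine le_trans (BU.abs_entry_le_mnorm ((Φ t t₀).toBlocks₁₁) i j) ?_
    refine le_trans (hB11bnd t₀ ht₀ t hlet) ?_
    exact mul_le_mul_of_nonneg_left hexpμ1 hK₁0.le
  have e12 : ∀ i j, |Φ t t₀ (Sum.inl i) (Sum.inr j)| ≤ 2*C * Real.exp (-μ*(t-t₀)) := by
    intro i j
    refine le_trans (BU.abs_entry_le_mnorm ((Φ t t₀).toBlocks₁₂) i j) ?_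
    refine le_trans (hfin12 t₀ ht₀ t hlet) ?_
    have : 2*C*Real.exp (-ν*(t-t₀)) ≤ 2*C*Real.exp (-μ*(t-t₀)) :=
      mul_le_mul_of_nonneg_left hexpμν (by linarith)
    linarith
  have e21 : ∀ i j, |Φ t t₀ (Sum.inr i) (Sum.inl j)| = 0 := by
    intro i j
    have hz := hB21z t₀ ht₀ t htI
    have : (Φ t t₀).toBlocks₂₁ i j = 0 := by rw [hz]; rfl
    rw [show Φ t t₀ (Sum.inr i) (Sum.inl j) = (Φ t t₀).toBlocks₂₁ i j from rfl, this, abs_zero]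
  have e22 : ∀ i j, |Φ t t₀ (Sum.inr i) (Sum.inr j)| ≤ K₂ * Real.exp (-μ*(t-t₀)) := by
    intro i j
    refine le_trans (BU.abs_entry_le_mnorm ((Φ t t₀).toBlocks₂₂) i j) ?_
    refine le_trans (hB22bnd t₀ ht₀ t hlet) ?_
    exact mul_le_mul_of_nonneg_left hexpμ2 hK₂0.le
  calc mnorm (Φ t t₀) ≤ ∑ I, ∑ J, |Φ t t₀ I J| := BU.mnorm_le_sum _
    _ ≤ cp*cp*(K₁*Real.exp (-μ*(t-t₀))) + cp*cq*(2*C*Real.exp (-μ*(t-t₀)))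
        + (cq*cp*0 + cq*cq*(K₂*Real.exp (-μ*(t-t₀)))) := by
        rw [Fintype.sum_sum_type]
        simp only [Fintype.sum_sum_type]
        apply add_le_add
        · calc (∑ i : Fin (n-k), ((∑ j : Fin (n-k), |Φ t t₀ (Sum.inl i) (Sum.inl j)|)
                + ∑ j : Fin k, |Φ t t₀ (Sum.inl i) (Sum.inr j)|))
              ≤ ∑ _i : Fin (n-k), (cp*(K₁*Real.exp (-μ*(t-t₀))) + cq*(2*C*Real.exp (-μ*(t-t₀)))) := by
                apply Finset.sum_le_sum
                intro i _
                apply add_le_add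
                · calc (∑ j : Fin (n-k), |Φ t t₀ (Sum.inl i) (Sum.inl j)|)
                      ≤ ∑ _j : Fin (n-k), K₁*Real.exp (-μ*(t-t₀)) :=
                        Finset.sum_le_sum (fun j _ => e11 i j)
                    _ = cp*(K₁*Real.exp (-μ*(t-t₀))) := by
                        rw [Finset.sum_const, Finset.card_univ, nsmul_eq_mul, hcp]
                · calc (∑ j : Fin k, |Φ t t₀ (Sum.inl i) (Sum.inr j)|)
                      ≤ ∑ _j : Fin k, 2*C*Real.exp (-μ*(t-t₀)) :=
                        Finset.sum_le_sum (fun j _ => e12 i j)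
                    _ = cq*(2*C*Real.exp (-μ*(t-t₀))) := by
                        rw [Finset.sum_const, Finset.card_univ, nsmul_eq_mul, hcq]
            _ = cp*cp*(K₁*Real.exp (-μ*(t-t₀))) + cp*cq*(2*C*Real.exp (-μ*(t-t₀))) := by
                rw [Finset.sum_const, Finset.card_univ, nsmul_eq_mul, hcp]
                ring
        · calc (∑ i : Fin k, ((∑ j : Fin (n-k), |Φ t t₀ (Sum.inr i) (Sum.inl j)|)
                + ∑ j : Fin k, |Φ t t₀ (Sum.inr i) (Sum.inr j)|))
              ≤ ∑ _i : Fin k, (cp*(0:ℝ) + cq*(K₂*Real.exp (-μ*(t-t₀)))) := by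
                apply Finset.sum_le_sum
                intro i _
                apply add_le_add
                · calc (∑ j : Fin (n-k), |Φ t t₀ (Sum.inr i) (Sum.inl j)|)
                      ≤ ∑ _j : Fin (n-k), (0:ℝ) :=
                        Finset.sum_le_sum (fun j _ => le_of_eq (e21 i j))
                    _ = cp*(0:ℝ) := by
                        rw [Finset.sum_const, Finset.card_univ, nsmul_eq_mul, hcp]
                · calc (∑ j : Fin k, |Φ t t₀ (Sum.inr i) (Sum.inr j)|)
                      ≤ ∑ _j : Fin k, K₂*Real.exp (-μ*(t-t₀)) :=
                        Finset.sum_le_sum (fun j _ => e22 i j)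
                    _ = cq*(K₂*Real.exp (-μ*(t-t₀))) := by
                        rw [Finset.sum_const, Finset.card_univ, nsmul_eq_mul, hcq]
            _ = cq*cp*0 + cq*cq*(K₂*Real.exp (-μ*(t-t₀))) := by
                rw [Finset.sum_const, Finset.card_univ, nsmul_eq_mul, hcq]
                ring
    _ ≤ Kf * Real.exp (-μ * (t - t₀)) := by
        have heq : cp*cp*(K₁*Real.exp (-μ*(t-t₀))) + cp*cq*(2*C*Real.exp (-μ*(t-t₀)))
            + (cq*cp*0 + cq*cq*(K₂*Real.exp (-μ*(t-t₀))))
            = (cp*cp*K₁ + cp*cq*(2*C) + cq*cq*K₂) * Real.exp (-μ*(t-t₀)) := by ring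
        rw [heq, hKfdef]
        exact mul_le_mul_of_nonneg_right (by linarith) hEpos.le

end
end
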